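/- arXiv:2402.08651 — 7 statements merged into one kernel-verified Lean document; each statement's English description precedes it below -/
import Mathlib

section
/- Let P be a finite poset containing two incomparable elements a, b such that a and b are each strictly smaller than every element of P ∖ {a, b}. Then for every n ∈ ℕ, sat*(n, P) ≥ n + 1. -/
open Finset

/-- A family of finite sets contains an induced copy of the poset `P`. -/
def ContainsIndCopy (P : Type*) [PartialOrder P] (F : Finset (Finset ℕ)) : Prop :=
  ∃ f : P → Finset ℕ, Function.Injective f ∧ (∀ p, f p ∈ F) ∧
    ∀ p q : P, p ≤ q ↔ f p ⊆ f q

/-- `F ⊆ 2^[n]` is induced `P`-saturated. -/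
def IsIndPSaturated (n : ℕ) (P : Type*) [PartialOrder P] (F : Finset (Finset ℕ)) : Prop :=
  (∀ A ∈ F, A ⊆ Finset.Icc 1 n) ∧
  ¬ ContainsIndCopy P F ∧
  ∀ G ⊆ Finset.Icc 1 n, G ∉ F → ContainsIndCopy P (insert G F)

/-- `sat*(n, P)`: minimum size of an induced `P`-saturated family in `2^[n]`. -/
noncomputable def satStarP (n : ℕ) (P : Type*) [PartialOrder P] : ℕ :=
  sInf {m | ∃ F : Finset (Finset ℕ), IsIndPSaturated n P F ∧ F.card = m}

/-- `a` and `b` are legs of `P`: incomparable, and each strictly smaller than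
every element of `P \ {a, b}`. -/
def IsLegs (P : Type*) [PartialOrder P] (a b : P) : Prop :=
  ¬ a ≤ b ∧ ¬ b ≤ a ∧ ∀ c : P, c ≠ a → c ≠ b → a < c ∧ b < c

/-- `C ∈ F` is a partner of `x`: `{x}` and `C` form the legs of some induced
copy of `P` in `F ∪ {{x}}`. -/
def IsPartner (P : Type*) [PartialOrder P] (a b : P) (F : Finset (Finset ℕ))
    (x : ℕ) (C : Finset ℕ) : Prop :=
  C ∈ F ∧ ∃ f : P → Finset ℕ, Function.Injective f ∧
    (∀ p, f p ∈ insert ({x} : Finset ℕ) F) ∧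
    (∀ p q : P, p ≤ q ↔ f p ⊆ f q) ∧
    ({f a, f b} : Set (Finset ℕ)) = {({x} : Finset ℕ), C}


section Aux

variable {P : Type*} [PartialOrder P]

/-- Injectivity is automatic for an order-embedding realization. -/
lemma aux_injective_of_iso (f : P → Finset ℕ) (hiso : ∀ p q : P, p ≤ q ↔ f p ⊆ f q) :
    Function.Injective f := fun p q h =>
  le_antisymm ((hiso p q).mpr (by rw [h])) ((hiso q p).mpr (by rw [h]))

/-- The empty set belongs to every induced `P`-saturated family, when `P` has legs. -/
lemma aux_empty_mem {n : ℕ} {F : Finset (Finset ℕ)} {a b : P}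
    (hab : ¬ a ≤ b) (hba : ¬ b ≤ a)
    (hsmall : ∀ c : P, c ≠ a → c ≠ b → a < c ∧ b < c)
    (hsat : IsIndPSaturated n P F) : (∅ : Finset ℕ) ∈ F := by
  classical
  obtain ⟨hsub, hfree, hins⟩ := hsat
  by_contra hne
  obtain ⟨f, hinj, hmem, hiso⟩ := hins ∅ (Finset.empty_subset _) hne
  have hp : ∃ p, f p = ∅ := by
    by_contra h
    push_neg at h
    exact hfree ⟨f, hinj, fun q => (Finset.mem_insert.mp (hmem q)).resolve_left (Finset.nonempty_iff_ne_empty.mp (h q)), hiso⟩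
  obtain ⟨p, hp⟩ := hp
  rcases eq_or_ne a p with rfl | hpa
  · exact hab ((hiso a b).mpr (by rw [hp]; exact Finset.empty_subset _))
  rcases eq_or_ne b p with rfl | hpb
  · exact hba ((hiso b a).mpr (by rw [hp]; exact Finset.empty_subset _))
  · have h1 : f a ⊆ f p := (hiso a p).mp (hsmall p hpa.symm hpb.symm).1.le
    rw [hp, Finset.subset_empty] at h1
    exact hpa (hinj (h1.trans hp.symm))

/-- The invariant carried through the growing-partner recursion:
`C ∈ F`, `x ∉ C`, and there is an induced copy of `P \ {a,b}` in `F`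
all of whose members contain `C ∪ {x}`. -/
abbrev AuxGood (a b : P) (F : Finset (Finset ℕ)) (x : ℕ) (C : Finset ℕ) : Prop :=
  C ∈ F ∧ x ∉ C ∧ ∃ g : P → Finset ℕ,
    (∀ q, q ≠ a → q ≠ b → g q ∈ F) ∧
    (∀ q, q ≠ a → q ≠ b → insert x C ⊆ g q) ∧
    (∀ q r, q ≠ a → q ≠ b → r ≠ a → r ≠ b → (q ≤ r ↔ g q ⊆ g r))

lemma aux_good_step {n : ℕ} {F : Finset (Finset ℕ)} {a b : P}
    (hab : ¬ a ≤ b) (hba : ¬ b ≤ a)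
    (hsmall : ∀ c : P, c ≠ a → c ≠ b → a < c ∧ b < c)
    (hsat : IsIndPSaturated n P F) {x : ℕ} (hx : x ∈ Finset.Icc 1 n)
    (hno : ∀ A ∈ F, x ∉ A → insert x A ∉ F)
    {C : Finset ℕ} (hC : AuxGood a b F x C) :
    ∃ C', AuxGood a b F x C' ∧ C ⊂ C' := by
  classical
  obtain ⟨hsub, hfree, hins⟩ := hsat
  obtain ⟨hCF, hxC, g, hgF, hgsub, hgiso⟩ := hC
  have hane : a ≠ b := fun h => hab (h ▸ le_refl a)
  have hGsub : insert x C ⊆ Finset.Icc 1 n := Finset.insert_subset hx (hsub C hCF)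
  have hGF : insert x C ∉ F := hno C hCF hxC
  obtain ⟨f, hinj, hmem, hiso⟩ := hins _ hGsub hGF
  have hpex : ∃ p, f p = insert x C := by
    by_contra h
    push_neg at h
    exact hfree ⟨f, hinj, fun q => (Finset.mem_insert.mp (hmem q)).resolve_left (h q), hiso⟩
  obtain ⟨p, hp⟩ := hpex
  have hmemF : ∀ q, q ≠ p → f q ∈ F := fun q hq =>
    (Finset.mem_insert.mp (hmem q)).resolve_left (fun h => hq (hinj (h.trans hp.symm)))
  rcases eq_or_ne a p with rfl | hpa
  · -- the inserted set plays leg `a`; its partner is `f b`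
    have hfbF : f b ∈ F := hmemF b (Ne.symm hane)
    have hnGfb : ¬ insert x C ⊆ f b := by
      intro hsub'
      exact hab ((hiso a b).mpr (by rw [hp]; exact hsub'))
    have hnfbG : ¬ f b ⊆ insert x C := by
      intro hsub'
      exact hba ((hiso b a).mpr (by rw [hp]; exact hsub'))
    by_cases hCC : C ⊆ f b
    · -- the partner strictly grows: new Good set
      refine ⟨f b, ⟨hfbF, ?_, f, ?_, ?_, ?_⟩, ?_⟩
      · intro hxfb
        exact hnGfb (Finset.insert_subset hxfb hCC)
      · intro q hqa hqb
        exact hmemF q hqa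
      · intro q hqa hqb
        have hxq : x ∈ f q := by
          have h1 : f a ⊆ f q := (hiso a q).mp (hsmall q hqa hqb).1.le
          exact h1 (by rw [hp]; exact Finset.mem_insert_self x C)
        have h2 : f b ⊆ f q := (hiso b q).mp (hsmall q hqa hqb).2.le
        exact Finset.insert_subset hxq h2
      · intro q r hqa hqb hra hrb
        exact hiso q r
      · rw [Finset.ssubset_def]
        exact ⟨hCC, fun hcon => hnfbG (hcon.trans (Finset.subset_insert x C))⟩
    · -- otherwise `C` and `f b` are incomparable: build a copy of `P` inside `F`
      exfalso
      apply hfree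
      set h : P → Finset ℕ := fun r => if r = a then C else if r = b then f b else f r with hh
      have ea : h a = C := by simp [hh]
      have eb : h b = f b := by simp [hh, Ne.symm hane]
      have eq' : ∀ q, q ≠ a → q ≠ b → h q = f q := by
        intro q h1 h2; simp [hh, h1, h2]
      have hisoH : ∀ r s : P, r ≤ s ↔ h r ⊆ h s := by
        intro r s
        rcases eq_or_ne a r with rfl | hra
        · rcases eq_or_ne a s with rfl | hsa
          · rw [ea]; exact iff_of_true le_rfl (Finset.Subset.refl _)
          rcases eq_or_ne b s with rfl | hsb
          · rw [ea, eb]; exact iff_of_false hab hCC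
          · rw [ea, eq' s hsa.symm hsb.symm]
            refine iff_of_true (hsmall s hsa.symm hsb.symm).1.le ?_
            have h1 : f a ⊆ f s := (hiso a s).mp (hsmall s hsa.symm hsb.symm).1.le
            exact (Finset.subset_insert x C).trans (by rw [← hp]; exact h1)
        rcases eq_or_ne b r with rfl | hrb
        · rcases eq_or_ne a s with rfl | hsa
          · rw [eb, ea]
            refine iff_of_false hba ?_
            intro hcon
            exact hnfbG (hcon.trans (Finset.subset_insert x C))
          rcases eq_or_ne b s with rfl | hsb
          · rw [eb]; exact iff_of_true le_rfl (Finset.Subset.refl _)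
          · rw [eb, eq' s hsa.symm hsb.symm]; exact hiso b s
        · rcases eq_or_ne a s with rfl | hsa
          · rw [eq' r hra.symm hrb.symm, ea]
            refine iff_of_false (hsmall r hra.symm hrb.symm).1.not_ge ?_
            intro hcon
            have hxr : x ∈ f r := by
              have h1 : f a ⊆ f r := (hiso a r).mp (hsmall r hra.symm hrb.symm).1.le
              exact h1 (by rw [hp]; exact Finset.mem_insert_self x C)
            exact hxC (hcon hxr)
          rcases eq_or_ne b s with rfl | hsb
          · rw [eq' r hra.symm hrb.symm, eb]; exact hiso r b
          · rw [eq' r hra.symm hrb.symm, eq' s hsa.symm hsb.symm]; exact hiso r s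
      refine ⟨h, aux_injective_of_iso h hisoH, ?_, hisoH⟩
      intro r
      rcases eq_or_ne a r with rfl | hra
      · rw [ea]; exact hCF
      rcases eq_or_ne b r with rfl | hrb
      · rw [eb]; exact hfbF
      · rw [eq' r hra.symm hrb.symm]; exact hmemF r hra.symm
  rcases eq_or_ne b p with rfl | hpb
  · -- the inserted set plays leg `b`; its partner is `f a`
    have hfaF : f a ∈ F := hmemF a hane
    have hnGfa : ¬ insert x C ⊆ f a := by
      intro hsub'
      exact hba ((hiso b a).mpr (by rw [hp]; exact hsub'))
    have hnfaG : ¬ f a ⊆ insert x C := by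
      intro hsub'
      exact hab ((hiso a b).mpr (by rw [hp]; exact hsub'))
    by_cases hCC : C ⊆ f a
    · refine ⟨f a, ⟨hfaF, ?_, f, ?_, ?_, ?_⟩, ?_⟩
      · intro hxfa
        exact hnGfa (Finset.insert_subset hxfa hCC)
      · intro q hqa hqb
        exact hmemF q hqb
      · intro q hqa hqb
        have hxq : x ∈ f q := by
          have h1 : f b ⊆ f q := (hiso b q).mp (hsmall q hqa hqb).2.le
          exact h1 (by rw [hp]; exact Finset.mem_insert_self x C)
        have h2 : f a ⊆ f q := (hiso a q).mp (hsmall q hqa hqb).1.le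
        exact Finset.insert_subset hxq h2
      · intro q r hqa hqb hra hrb
        exact hiso q r
      · rw [Finset.ssubset_def]
        exact ⟨hCC, fun hcon => hnfaG (hcon.trans (Finset.subset_insert x C))⟩
    · exfalso
      apply hfree
      set h : P → Finset ℕ := fun r => if r = a then f a else if r = b then C else f r with hh
      have ea : h a = f a := by simp [hh]
      have eb : h b = C := by simp [hh, Ne.symm hane]
      have eq' : ∀ q, q ≠ a → q ≠ b → h q = f q := by
        intro q h1 h2; simp [hh, h1, h2]
      have hisoH : ∀ r s : P, r ≤ s ↔ h r ⊆ h s := by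
        intro r s
        rcases eq_or_ne a r with rfl | hra
        · rcases eq_or_ne a s with rfl | hsa
          · rw [ea]; exact iff_of_true le_rfl (Finset.Subset.refl _)
          rcases eq_or_ne b s with rfl | hsb
          · rw [ea, eb]
            refine iff_of_false hab ?_
            intro hcon
            exact hnfaG (hcon.trans (Finset.subset_insert x C))
          · rw [ea, eq' s hsa.symm hsb.symm]; exact hiso a s
        rcases eq_or_ne b r with rfl | hrb
        · rcases eq_or_ne a s with rfl | hsa
          · rw [eb, ea]; exact iff_of_false hba hCC
          rcases eq_or_ne b s with rfl | hsb
          · rw [eb]; exact iff_of_true le_rfl (Finset.Subset.refl _)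
          · rw [eb, eq' s hsa.symm hsb.symm]
            refine iff_of_true (hsmall s hsa.symm hsb.symm).2.le ?_
            have h1 : f b ⊆ f s := (hiso b s).mp (hsmall s hsa.symm hsb.symm).2.le
            exact (Finset.subset_insert x C).trans (by rw [← hp]; exact h1)
        · rcases eq_or_ne a s with rfl | hsa
          · rw [eq' r hra.symm hrb.symm, ea]; exact hiso r a
          rcases eq_or_ne b s with rfl | hsb
          · rw [eq' r hra.symm hrb.symm, eb]
            refine iff_of_false (hsmall r hra.symm hrb.symm).2.not_ge ?_
            intro hcon
            have hxr : x ∈ f r := by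
              have h1 : f b ⊆ f r := (hiso b r).mp (hsmall r hra.symm hrb.symm).2.le
              exact h1 (by rw [hp]; exact Finset.mem_insert_self x C)
            exact hxC (hcon hxr)
          · rw [eq' r hra.symm hrb.symm, eq' s hsa.symm hsb.symm]; exact hiso r s
      refine ⟨h, aux_injective_of_iso h hisoH, ?_, hisoH⟩
      intro r
      rcases eq_or_ne a r with rfl | hra
      · rw [ea]; exact hfaF
      rcases eq_or_ne b r with rfl | hrb
      · rw [eb]; exact hCF
      · rw [eq' r hra.symm hrb.symm]; exact hmemF r hrb.symm
  · -- the inserted set plays an "upper" role: assemble a copy of `P` inside `F`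
    exfalso
    apply hfree
    have hfaF : f a ∈ F := hmemF a hpa
    have hfbF : f b ∈ F := hmemF b hpb
    have hfaG : f a ⊆ insert x C := by
      rw [← hp]; exact (hiso a p).mp (hsmall p hpa.symm hpb.symm).1.le
    have hfbG : f b ⊆ insert x C := by
      rw [← hp]; exact (hiso b p).mp (hsmall p hpa.symm hpb.symm).2.le
    have hfane : f a ≠ insert x C := fun h => hpa (hinj (hp.trans h.symm)).symm
    have hfbne : f b ≠ insert x C := fun h => hpb (hinj (hp.trans h.symm)).symm
    set h : P → Finset ℕ := fun r => if r = a then f a else if r = b then f b else g r with hh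
    have ea : h a = f a := by simp [hh]
    have eb : h b = f b := by simp [hh, Ne.symm hane]
    have eq' : ∀ q, q ≠ a → q ≠ b → h q = g q := by
      intro q h1 h2; simp [hh, h1, h2]
    have hisoH : ∀ r s : P, r ≤ s ↔ h r ⊆ h s := by
      intro r s
      rcases eq_or_ne a r with rfl | hra
      · rcases eq_or_ne a s with rfl | hsa
        · rw [ea]; exact iff_of_true le_rfl (Finset.Subset.refl _)
        rcases eq_or_ne b s with rfl | hsb
        · rw [ea, eb]; exact hiso a b
        · rw [ea, eq' s hsa.symm hsb.symm]
          exact iff_of_true (hsmall s hsa.symm hsb.symm).1.le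
            (hfaG.trans (hgsub s hsa.symm hsb.symm))
      rcases eq_or_ne b r with rfl | hrb
      · rcases eq_or_ne a s with rfl | hsa
        · rw [eb, ea]; exact hiso b a
        rcases eq_or_ne b s with rfl | hsb
        · rw [eb]; exact iff_of_true le_rfl (Finset.Subset.refl _)
        · rw [eb, eq' s hsa.symm hsb.symm]
          exact iff_of_true (hsmall s hsa.symm hsb.symm).2.le
            (hfbG.trans (hgsub s hsa.symm hsb.symm))
      · rcases eq_or_ne a s with rfl | hsa
        · rw [eq' r hra.symm hrb.symm, ea]
          refine iff_of_false (hsmall r hra.symm hrb.symm).1.not_ge ?_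
          intro hcon
          exact hfane (Finset.Subset.antisymm hfaG ((hgsub r hra.symm hrb.symm).trans hcon))
        rcases eq_or_ne b s with rfl | hsb
        · rw [eq' r hra.symm hrb.symm, eb]
          refine iff_of_false (hsmall r hra.symm hrb.symm).2.not_ge ?_
          intro hcon
          exact hfbne (Finset.Subset.antisymm hfbG ((hgsub r hra.symm hrb.symm).trans hcon))
        · rw [eq' r hra.symm hrb.symm, eq' s hsa.symm hsb.symm]
          exact hgiso r s hra.symm hrb.symm hsa.symm hsb.symm
    refine ⟨h, aux_injective_of_iso h hisoH, ?_, hisoH⟩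
    intro r
    rcases eq_or_ne a r with rfl | hra
    · rw [ea]; exact hfaF
    rcases eq_or_ne b r with rfl | hrb
    · rw [eb]; exact hfbF
    · rw [eq' r hra.symm hrb.symm]; exact hgF r hra.symm hrb.symm

/-- The key cover-pair lemma: an induced `P`-saturated family (for a legged poset `P`)
contains, for each `x ∈ [n]`, a pair `A ⊂ A ∪ {x}`. -/
lemma aux_cover {n : ℕ} {F : Finset (Finset ℕ)} {a b : P}
    (hab : ¬ a ≤ b) (hba : ¬ b ≤ a)
    (hsmall : ∀ c : P, c ≠ a → c ≠ b → a < c ∧ b < c)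
    (hsat : IsIndPSaturated n P F) {x : ℕ} (hx : x ∈ Finset.Icc 1 n) :
    ∃ A ∈ F, x ∉ A ∧ insert x A ∈ F := by
  classical
  have hempty : (∅ : Finset ℕ) ∈ F := aux_empty_mem hab hba hsmall hsat
  obtain ⟨hsub, hfree, hins⟩ := hsat
  by_contra hno
  push_neg at hno
  have hno' : ∀ A ∈ F, x ∉ A → insert x A ∉ F := fun A hA hxA h => (hno A hA hxA) h
  have hane : a ≠ b := fun h => hab (h ▸ le_refl a)
  -- base: the singleton {x}
  have hsing : ({x} : Finset ℕ) ∉ F := by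
    have := hno' ∅ hempty (Finset.notMem_empty x)
    simpa using this
  have hxsub : ({x} : Finset ℕ) ⊆ Finset.Icc 1 n := by
    simpa using hx
  obtain ⟨f, hinj, hmem, hiso⟩ := hins _ hxsub hsing
  have hpex : ∃ p, f p = {x} := by
    by_contra h
    push_neg at h
    exact hfree ⟨f, hinj, fun q => (Finset.mem_insert.mp (hmem q)).resolve_left (h q), hiso⟩
  obtain ⟨p, hp⟩ := hpex
  have hmemF : ∀ q, q ≠ p → f q ∈ F := fun q hq =>
    (Finset.mem_insert.mp (hmem q)).resolve_left (fun h => hq (hinj (h.trans hp.symm)))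
  have hgood : ∃ C, AuxGood a b F x C := by
    rcases eq_or_ne a p with rfl | hpa
    · refine ⟨f b, hmemF b (Ne.symm hane), ?_, f, fun q hqa _ => hmemF q hqa, ?_,
        fun q r _ _ _ _ => hiso q r⟩
      · intro hxb
        exact hab ((hiso a b).mpr (by rw [hp]; simpa using hxb))
      · intro q hqa hqb
        have h1 : f a ⊆ f q := (hiso a q).mp (hsmall q hqa hqb).1.le
        have h2 : f b ⊆ f q := (hiso b q).mp (hsmall q hqa hqb).2.le
        refine Finset.insert_subset ?_ h2
        exact h1 (by rw [hp]; exact Finset.mem_singleton_self x)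
    rcases eq_or_ne b p with rfl | hpb
    · refine ⟨f a, hmemF a hane, ?_, f, fun q _ hqb => hmemF q hqb, ?_,
        fun q r _ _ _ _ => hiso q r⟩
      · intro hxa
        exact hba ((hiso b a).mpr (by rw [hp]; simpa using hxa))
      · intro q hqa hqb
        have h1 : f b ⊆ f q := (hiso b q).mp (hsmall q hqa hqb).2.le
        have h2 : f a ⊆ f q := (hiso a q).mp (hsmall q hqa hqb).1.le
        refine Finset.insert_subset ?_ h2
        exact h1 (by rw [hp]; exact Finset.mem_singleton_self x)
    · exfalso
      have hfa : f a ⊆ {x} := by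
        rw [← hp]; exact (hiso a p).mp (hsmall p hpa.symm hpb.symm).1.le
      have hfb : f b ⊆ {x} := by
        rw [← hp]; exact (hiso b p).mp (hsmall p hpa.symm hpb.symm).2.le
      rcases Finset.subset_singleton_iff.mp hfa with h1 | h1
      · rcases Finset.subset_singleton_iff.mp hfb with h2 | h2
        · exact hane (hinj (h1.trans h2.symm))
        · exact hpb (hinj (h2.trans hp.symm))
      · exact hpa (hinj (h1.trans hp.symm))
  obtain ⟨C₀, hC₀⟩ := hgood
  have hn1 : 1 ≤ n := by
    have := Finset.mem_Icc.mp hx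
    omega
  have hterm : ∀ k (C : Finset ℕ), AuxGood a b F x C → n ≤ C.card + k → False := by
    intro k
    induction k with
    | zero =>
      intro C hC hle
      have h1 : C ⊆ (Finset.Icc 1 n).erase x := by
        intro y hy
        exact Finset.mem_erase.mpr ⟨fun h => hC.2.1 (h ▸ hy), hsub C hC.1 hy⟩
      have h2 : C.card ≤ ((Finset.Icc 1 n).erase x).card := Finset.card_le_card h1
      rw [Finset.card_erase_of_mem hx, Nat.card_Icc] at h2
      omega
    | succ k ih =>
      intro C hC hle
      obtain ⟨C', hC', hss⟩ :=
        aux_good_step hab hba hsmall ⟨hsub, hfree, hins⟩ hx hno' hC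
      have := Finset.card_lt_card hss
      exact ih C' hC' (by omega)
  exact hterm n C₀ hC₀ (by omega)

/-- Lower bound via linear algebra: a saturated family has at least `n+1` members. -/
lemma aux_card_bound {n : ℕ} {F : Finset (Finset ℕ)} {a b : P}
    (hab : ¬ a ≤ b) (hba : ¬ b ≤ a)
    (hsmall : ∀ c : P, c ≠ a → c ≠ b → a < c ∧ b < c)
    (hsat : IsIndPSaturated n P F) : n + 1 ≤ F.card := by
  classical
  have hempty : (∅ : Finset ℕ) ∈ F := aux_empty_mem hab hba hsmall hsat
  have hcover : ∀ x ∈ Finset.Icc 1 n, ∃ A ∈ F, x ∉ A ∧ insert x A ∈ F :=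
    fun x hx => aux_cover hab hba hsmall hsat hx
  have hsplit : ∀ (u v : Option (Finset.Icc 1 n : Finset ℕ) → ℚ) (A : Finset ℕ),
      (∑ i : (Finset.Icc 1 n : Finset ℕ), if ((i : ℕ) ∈ A) then u (some i) + v (some i) else 0)
      = (∑ i : (Finset.Icc 1 n : Finset ℕ), if ((i : ℕ) ∈ A) then u (some i) else 0)
      + (∑ i : (Finset.Icc 1 n : Finset ℕ), if ((i : ℕ) ∈ A) then v (some i) else 0) := by
    intro u v A
    rw [← Finset.sum_add_distrib]
    refine Finset.sum_congr rfl ?_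
    intro i _
    split_ifs <;> simp
  let T : (Option (Finset.Icc 1 n : Finset ℕ) → ℚ) →ₗ[ℚ] ({A : Finset ℕ // A ∈ F} → ℚ) :=
    { toFun := fun w A =>
        w none + ∑ i : (Finset.Icc 1 n : Finset ℕ),
          if ((i : ℕ) ∈ (A : Finset ℕ)) then w (some i) else 0
      map_add' := by
        intro u v
        funext A
        simp only [Pi.add_apply]
        rw [hsplit u v (A : Finset ℕ)]
        ring
      map_smul' := by
        intro c w
        funext A
        simp only [Pi.smul_apply, smul_eq_mul, RingHom.id_apply]
        have hmul : (∑ i : (Finset.Icc 1 n : Finset ℕ),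
            if ((i : ℕ) ∈ (A : Finset ℕ)) then c * w (some i) else 0)
            = c * (∑ i : (Finset.Icc 1 n : Finset ℕ),
            if ((i : ℕ) ∈ (A : Finset ℕ)) then w (some i) else 0) := by
          rw [Finset.mul_sum]
          refine Finset.sum_congr rfl ?_
          intro i _
          split_ifs <;> ring
        rw [hmul]
        ring }
  have hTinj : Function.Injective T := by
    intro w₁ w₂ heq
    have hdiff : T (w₁ - w₂) = 0 := by
      rw [map_sub, heq, sub_self]
    set w := w₁ - w₂ with hw
    have h0 : ∀ A : {A : Finset ℕ // A ∈ F}, w none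
        + ∑ i : (Finset.Icc 1 n : Finset ℕ),
          (if ((i : ℕ) ∈ (A : Finset ℕ)) then w (some i) else 0) = 0 := by
      intro A
      exact congrFun hdiff A
    have hnone : w none = 0 := by
      have := h0 ⟨∅, hempty⟩
      simpa using this
    have hsome : ∀ i : (Finset.Icc 1 n : Finset ℕ), w (some i) = 0 := by
      intro i
      obtain ⟨A, hAF, hxA, hiA⟩ := hcover (i : ℕ) i.2
      have e1 := h0 ⟨A, hAF⟩
      have e2 := h0 ⟨insert (i : ℕ) A, hiA⟩
      have key : ∀ j : (Finset.Icc 1 n : Finset ℕ),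
          (if ((j : ℕ) ∈ insert (i : ℕ) A) then w (some j) else 0)
          = (if ((j : ℕ) ∈ A) then w (some j) else 0)
          + (if j = i then w (some j) else 0) := by
        intro j
        rcases eq_or_ne j i with heq' | hji
        · rw [heq']
          simp [hxA]
        · have hmemiff : ((j : ℕ) ∈ insert (i : ℕ) A) ↔ ((j : ℕ) ∈ A) := by
            simp only [Finset.mem_insert]
            constructor
            · rintro (h | h)
              · exact absurd (Subtype.ext h) hji
              · exact h
            · exact Or.inr
          simp [hmemiff, hji]
      simp only at e2
      rw [Finset.sum_congr rfl (fun j _ => key j), Finset.sum_add_distrib] at e2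
      have hsum : (∑ j : (Finset.Icc 1 n : Finset ℕ),
          if j = i then w (some j) else 0) = w (some i) := by
        simp
      rw [hsum] at e2
      simp only at e1
      linarith only [e1, e2, hnone]
    have hzero : w = 0 := by
      funext j
      rcases j with _ | i
      · simpa using hnone
      · simpa using hsome i
    have : w₁ - w₂ = 0 := by rw [← hw]; exact hzero
    exact sub_eq_zero.mp this
  have hle := LinearMap.finrank_le_finrank_of_injective hTinj
  rw [Module.finrank_fintype_fun_eq_card, Module.finrank_fintype_fun_eq_card,
    Fintype.card_option, Fintype.card_coe, Fintype.card_coe, Nat.card_Icc] at hle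
  omega

end Aux

/-- A saturated family always exists: take a `P`-free family of maximum size. -/
lemma aux_exists_saturated (P : Type*) [PartialOrder P] (a : P) (n : ℕ) :
    ∃ F : Finset (Finset ℕ), IsIndPSaturated n P F := by
  classical
  let S : Finset (Finset (Finset ℕ)) :=
    ((Finset.Icc 1 n).powerset.powerset).filter (fun F => ¬ ContainsIndCopy P F)
  have hS : (∅ : Finset (Finset ℕ)) ∈ S := by
    refine Finset.mem_filter.mpr ⟨?_, ?_⟩
    · exact Finset.mem_powerset.mpr (Finset.empty_subset _)
    · rintro ⟨f, -, hmem, -⟩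
      exact absurd (hmem a) (Finset.notMem_empty _)
  obtain ⟨F, hFS, hmax⟩ := Finset.exists_max_image S Finset.card ⟨∅, hS⟩
  obtain ⟨hF1, hF2⟩ := Finset.mem_filter.mp hFS
  have hF1' : F ⊆ (Finset.Icc 1 n).powerset := Finset.mem_powerset.mp hF1
  refine ⟨F, fun A hA => Finset.mem_powerset.mp (hF1' hA), hF2, ?_⟩
  intro G hG hGF
  by_contra hnc
  have hmem : insert G F ∈ S := by
    refine Finset.mem_filter.mpr ⟨?_, hnc⟩
    exact Finset.mem_powerset.mpr (Finset.insert_subset (Finset.mem_powerset.mpr hG) hF1')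
  have hcard := hmax _ hmem
  rw [Finset.card_insert_of_notMem hGF] at hcard
  omega

/-- If a finite poset `P` has two incomparable elements `a, b`
each strictly smaller than every element of `P \ {a,b}`, then `sat*(n,P) ≥ n+1`. -/
theorem stmt2 (P : Type*) [PartialOrder P] [Fintype P] (a b : P)
    (hab : ¬ a ≤ b) (hba : ¬ b ≤ a)
    (hsmall : ∀ c : P, c ≠ a → c ≠ b → a < c ∧ b < c)
    (n : ℕ) : n + 1 ≤ satStarP n P := by
  classical
  obtain ⟨F₀, hF₀⟩ := aux_exists_saturated P a n
  have hne : {m | ∃ F : Finset (Finset ℕ), IsIndPSaturated n P F ∧ F.card = m}.Nonempty :=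
    ⟨F₀.card, F₀, hF₀, rfl⟩
  obtain ⟨F₁, hF₁, hc⟩ := Nat.sInf_mem hne
  have hbound := aux_card_bound hab hba hsmall hF₁
  rw [satStarP, ← hc]
  exact hbound
end

section
/- Let n ∈ ℕ and A ⊆ B ⊆ [n]. Then there exist |B ∖ A| pairwise internally disjoint complete chains from A to B. -/
/-- `C` is a complete chain from `A` to `B`: totally ordered by inclusion,
with minimum `A`, maximum `B`, and `|C| = |B \ A| + 1`. -/
def IsCompleteChain (A B : Finset ℕ) (C : Finset (Finset ℕ)) : Prop :=
  A ∈ C ∧ B ∈ C ∧ (∀ X ∈ C, A ⊆ X ∧ X ⊆ B) ∧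
  (∀ X ∈ C, ∀ Y ∈ C, X ⊆ Y ∨ Y ⊆ X) ∧
  C.card = (B \ A).card + 1

/-- The first increment set of `L` (w.r.t. bottom `A`): the union of the sets in
`L` of size `|A| + 1`, minus `A`. -/
def firstIncrementSet (A : Finset ℕ) (L : Finset (Finset ℕ)) : Finset ℕ :=
  ((L.filter fun X => X.card = A.card + 1).sup id) \ A

/-- The last increment set of `L` (w.r.t. top `B`): `B` minus the intersection of
the sets in `L` of size `|B| - 1`. -/
def lastIncrementSet (B : Finset ℕ) (L : Finset (Finset ℕ)) : Finset ℕ :=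
  B.filter fun x => ∃ X ∈ L, X.card = B.card - 1 ∧ x ∉ X

/-- `L` is a union of `k` pairwise internally disjoint complete chains from `A` to `B`. -/
def IsLanternUnion (A B : Finset ℕ) (k : ℕ) (L : Finset (Finset ℕ)) : Prop :=
  ∃ C : Fin k → Finset (Finset ℕ),
    (∀ i, IsCompleteChain A B (C i)) ∧
    (∀ i j, i ≠ j → C i ∩ C j = {A, B}) ∧
    L = Finset.univ.biUnion C


theorem stmt3_aux (A B : Finset ℕ) (hAB : A ⊆ B) :
    ∃ C : Fin (B \ A).card → Finset (Finset ℕ),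
      (∀ i, (A ∈ C i ∧ B ∈ C i ∧ (∀ X ∈ C i, A ⊆ X ∧ X ⊆ B) ∧
        (∀ X ∈ C i, ∀ Y ∈ C i, X ⊆ Y ∨ Y ⊆ X) ∧
        (C i).card = (B \ A).card + 1)) ∧
      (∀ i j, i ≠ j → C i ∩ C j = {A, B}) := by
  classical
  set m := (B \ A).card with hm
  rcases Nat.eq_zero_or_pos m with h0 | hm0
  · exact ⟨fun i => (absurd i.2 (by omega)), fun i => (absurd i.2 (by omega)),
      fun i => (absurd i.2 (by omega))⟩
  -- enumeration of B \ A
  set f := (B \ A).orderEmbOfFin hm.symm with hf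
  have hfmem : ∀ j : Fin m, f j ∈ B \ A := fun j => Finset.orderEmbOfFin_mem _ _ j
  have hfsurj : ∀ x ∈ B \ A, ∃ j : Fin m, f j = x := by
    intro x hx
    have h := Finset.range_orderEmbOfFin (B \ A) hm.symm
    have : x ∈ Set.range (f : Fin m → ℕ) := by rw [hf, h]; exact hx
    exact this
  set g : ℕ → ℕ := fun t => f ⟨t % m, Nat.mod_lt _ hm0⟩ with hgdef
  have hg : ∀ t, g t ∈ B \ A := fun t => hfmem _
  have hgeq : ∀ s t, s % m = t % m → g s = g t := by
    intro s t h; simp only [hgdef, h]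
  have hgeq' : ∀ s t, g s = g t → s % m = t % m := by
    intro s t h
    have := f.injective h
    exact congrArg Fin.val this
  have hmodcancel : ∀ i t₁ t₂, t₁ < m → t₂ < m → (i + t₁) % m = (i + t₂) % m → t₁ = t₂ := by
    intro i t₁ t₂ h1 h2 h
    have := Nat.ModEq.add_left_cancel' i h
    rwa [Nat.ModEq, Nat.mod_eq_of_lt h1, Nat.mod_eq_of_lt h2] at this
  set P : ℕ → ℕ → Finset ℕ := fun i k => (Finset.range k).image (fun t => g (i + t)) with hP
  set S : ℕ → ℕ → Finset ℕ := fun i k => A ∪ P i k with hS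
  have hPsub : ∀ i k, P i k ⊆ B \ A := by
    intro i k x hx
    simp only [hP, Finset.mem_image] at hx
    obtain ⟨t, _, rfl⟩ := hx
    exact hg _
  have hPdisj : ∀ i k, Disjoint A (P i k) := by
    intro i k
    rw [Finset.disjoint_left]
    intro x hx hx2
    exact (Finset.mem_sdiff.mp (hPsub i k hx2)).2 hx
  have hfg : ∀ j : Fin m, g j.val = f j := by
    intro j
    simp only [hgdef]
    congr 1
    exact Fin.ext (Nat.mod_eq_of_lt j.2)
  have hPcard : ∀ i k, k ≤ m → (P i k).card = k := by
    intro i k hk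
    rw [hP]
    rw [Finset.card_image_of_injOn, Finset.card_range]
    intro t₁ h₁ t₂ h₂ h
    simp only [Finset.coe_range, Set.mem_Iio] at h₁ h₂
    exact hmodcancel i t₁ t₂ (lt_of_lt_of_le h₁ hk) (lt_of_lt_of_le h₂ hk) (hgeq' _ _ h)
  have hScard : ∀ i k, k ≤ m → (S i k).card = A.card + k := by
    intro i k hk
    rw [hS]
    rw [Finset.card_union_of_disjoint (hPdisj i k), hPcard i k hk]
  have hS0 : ∀ i, S i 0 = A := by intro i; simp [hS, hP]
  have hPm : ∀ i, P i m = B \ A := by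
    intro i
    apply Finset.Subset.antisymm (hPsub i m)
    intro x hx
    obtain ⟨j, rfl⟩ := hfsurj x hx
    simp only [hP, Finset.mem_image, Finset.mem_range]
    refine ⟨(j.val + m - i % m) % m, Nat.mod_lt _ hm0, ?_⟩
    rw [← hfg j]
    apply hgeq
    have h1 : (i + (j.val + m - i % m) % m) % m = (i % m + (j.val + m - i % m) % m) % m := by
      rw [Nat.mod_add_mod]
    rw [h1, Nat.add_mod_mod]
    have h2 : i % m + (j.val + m - i % m) = j.val + m := by
      have : i % m < m := Nat.mod_lt _ hm0
      omega
    rw [h2, Nat.add_mod_right]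
  have hSm : ∀ i, S i m = B := by
    intro i
    rw [hS]
    simp only
    rw [hPm, Finset.union_sdiff_of_subset hAB]
  have hSmono : ∀ i k k', k ≤ k' → S i k ⊆ S i k' := by
    intro i k k' hkk
    exact Finset.union_subset_union (le_refl A)
      (Finset.image_subset_image (by exact Finset.range_subset_range.mpr hkk))
  have hSsubB : ∀ i k, k ≤ m → S i k ⊆ B := by
    intro i k hk
    calc S i k ⊆ S i m := hSmono i k m hk
    _ = B := hSm i
  set C : Fin m → Finset (Finset ℕ) := fun i => (Finset.range (m+1)).image (S i.val) with hC
  have hmemC : ∀ i (X : Finset ℕ), X ∈ C i ↔ ∃ k ≤ m, S i.val k = X := by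
    intro i X
    simp only [hC, Finset.mem_image, Finset.mem_range, Nat.lt_succ_iff]
  refine ⟨C, ?_, ?_⟩
  · intro i
    refine ⟨?_, ?_, ?_, ?_, ?_⟩
    · exact (hmemC i A).mpr ⟨0, Nat.zero_le _, hS0 _⟩
    · exact (hmemC i B).mpr ⟨m, le_refl m, hSm _⟩
    · intro X hX
      obtain ⟨k, hk, rfl⟩ := (hmemC i X).mp hX
      exact ⟨Finset.subset_union_left, hSsubB _ k hk⟩
    · intro X hX Y hY
      obtain ⟨k, hk, rfl⟩ := (hmemC i X).mp hX
      obtain ⟨k', hk', rfl⟩ := (hmemC i Y).mp hY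
      rcases le_total k k' with h | h
      · exact Or.inl (hSmono _ _ _ h)
      · exact Or.inr (hSmono _ _ _ h)
    · rw [hC]
      rw [Finset.card_image_of_injOn, Finset.card_range]
      intro k₁ h₁ k₂ h₂ h
      simp only [Finset.coe_range, Set.mem_Iio, Nat.lt_succ_iff] at h₁ h₂
      have := hScard i.val k₁ h₁
      rw [h, hScard i.val k₂ h₂] at this
      omega
  · intro i j hij
    apply Finset.Subset.antisymm
    · intro X hX
      rw [Finset.mem_inter] at hX
      obtain ⟨k, hk, rfl⟩ := (hmemC i X).mp hX.1
      obtain ⟨k', hk', hk'eq⟩ := (hmemC j _).mp hX.2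
      have hkk : k' = k := by
        have h1 := hScard j.val k' hk'
        rw [hk'eq, hScard i.val k hk] at h1
        omega
      subst hkk
      rcases Nat.eq_zero_or_pos k' with rfl | hkpos
      · rw [hS0]; simp
      rcases eq_or_lt_of_le hk with rfl | hklt
      · rw [hSm]; simp
      -- now 1 ≤ k' < m : derive contradiction
      exfalso
      set k := k'
      have hPeq : P i.val k = P j.val k := by
        have h1 : S i.val k \ A = P i.val k := by
          rw [hS]; simp only
          rw [Finset.union_sdiff_cancel_left (hPdisj i.val k)]
        have h2 : S j.val k \ A = P j.val k := by
          rw [hS]; simp only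
          rw [Finset.union_sdiff_cancel_left (hPdisj j.val k)]
        rw [← h1, ← h2, hk'eq]
      have hmemP : ∀ a b x, x ∈ P a b ↔ ∃ t < b, g (a + t) = x := by
        intro a b x
        simp [hP]
      have hgi : g i.val ∈ P j.val k := by
        rw [← hPeq, hmemP]
        exact ⟨0, hkpos, by rw [Nat.add_zero]⟩
      obtain ⟨t, ht, hgt⟩ := (hmemP _ _ _).mp hgi
      have htmod : (j.val + t) % m = i.val := by
        have := hgeq' _ _ hgt
        rwa [Nat.mod_eq_of_lt i.2] at this
      rcases Nat.eq_zero_or_pos t with rfl | htpos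
      · apply hij
        apply Fin.ext
        rw [Nat.add_zero, Nat.mod_eq_of_lt j.2] at htmod
        exact htmod.symm
      -- x₀ := g (i + (m-1)) is in P j k but not P i k
      have hx0notin : g (i.val + (m - 1)) ∉ P i.val k := by
        rw [hmemP]
        rintro ⟨s, hs, hgs⟩
        have := hmodcancel i.val s (m - 1) (lt_of_lt_of_le hs hk) (by omega) (hgeq' _ _ hgs)
        omega
      apply hx0notin
      rw [hPeq, hmemP]
      refine ⟨t - 1, by omega, ?_⟩
      apply hgeq
      have h3 : j.val + (t - 1) + m = (j.val + t) + (m - 1) := by omega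
      calc (j.val + (t - 1)) % m = (j.val + (t - 1) + m) % m := (Nat.add_mod_right _ _).symm
      _ = ((j.val + t) + (m - 1)) % m := by rw [h3]
      _ = ((j.val + t) % m + (m - 1)) % m := by rw [Nat.mod_add_mod]
      _ = (i.val + (m - 1)) % m := by rw [htmod]
    · intro X hX
      rw [Finset.mem_insert, Finset.mem_singleton] at hX
      rw [Finset.mem_inter]
      rcases hX with rfl | rfl
      · exact ⟨(hmemC i X).mpr ⟨0, Nat.zero_le _, hS0 _⟩,
          (hmemC j X).mpr ⟨0, Nat.zero_le _, hS0 _⟩⟩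
      · exact ⟨(hmemC i X).mpr ⟨m, le_refl m, hSm _⟩,
          (hmemC j X).mpr ⟨m, le_refl m, hSm _⟩⟩

/-- For `A ⊆ B ⊆ [n]` there exist `|B \ A|` pairwise internally
disjoint complete chains from `A` to `B`. -/
theorem stmt3 (n : ℕ) (A B : Finset ℕ) (hAB : A ⊆ B) (hB : B ⊆ Finset.Icc 1 n) :
    ∃ C : Fin (B \ A).card → Finset (Finset ℕ),
      (∀ i, IsCompleteChain A B (C i)) ∧
      (∀ i j, i ≠ j → C i ∩ C j = {A, B}) := by
  obtain ⟨C, h1, h2⟩ := stmt3_aux A B hAB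
  exact ⟨C, fun i => h1 i, h2⟩
end

section
/- Let s ≥ t ≥ 2 and n ≥ 2s + t − 1. For every A ⊆ [s+t], there exists an upper s-lantern L^s(A), i.e., a union of s−1 pairwise internally disjoint complete chains from A to A ∪ [s+t+1, n] whose last increment set is [s+t+1, 2s+t−1], and there exists a lower t-lantern L_t(A), i.e., a union of t−1 pairwise internally disjoint complete chains from A to A ∪ [s+t+1, n] whose first increment set is [s+t+1, s+2t−1]. -/
/-- An upper `s`-lantern on `A`: a union of `s - 1` pairwise internally disjoint
complete chains from `A` to `A ∪ [s+t+1, n]` whose last increment set is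
`[s+t+1, 2s+t-1]`. -/
def IsUpperLantern (n s t : ℕ) (A : Finset ℕ) (L : Finset (Finset ℕ)) : Prop :=
  IsLanternUnion A (A ∪ Finset.Icc (s+t+1) n) (s-1) L ∧
  lastIncrementSet (A ∪ Finset.Icc (s+t+1) n) L = Finset.Icc (s+t+1) (2*s+t-1)

/-- A lower `t`-lantern on `A`: a union of `t - 1` pairwise internally disjoint
complete chains from `A` to `A ∪ [s+t+1, n]` whose first increment set is
`[s+t+1, s+2t-1]`. -/
def IsLowerLantern (n s t : ℕ) (A : Finset ℕ) (L : Finset (Finset ℕ)) : Prop :=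
  IsLanternUnion A (A ∪ Finset.Icc (s+t+1) n) (t-1) L ∧
  firstIncrementSet A L = Finset.Icc (s+t+1) (s+2*t-1)


namespace Stmt4

open Finset

def ee (b j : ℕ) : ℕ := b + 1 + j

def P (b m : ℕ) (A : Finset ℕ) (a j : ℕ) : Finset ℕ :=
  A ∪ (Finset.range j).image (fun r => ee b ((a + r) % m))

def Ch (b m : ℕ) (A : Finset ℕ) (a : ℕ) : Finset (Finset ℕ) :=
  (Finset.range (m + 1)).image (P b m A a)

lemma mod_cancel {a r r' m : ℕ} (h1 : r < m) (h2 : r' < m)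
    (h : (a + r) % m = (a + r') % m) : r = r' := by
  have : r % m = r' % m := Nat.ModEq.add_left_cancel' a h
  rwa [Nat.mod_eq_of_lt h1, Nat.mod_eq_of_lt h2] at this

lemma mod_solve {m k : ℕ} (hm : 0 < m) (hk : k < m) (a : ℕ) :
    ∃ r < m, (a + r) % m = k := by
  refine ⟨(m + k - a % m) % m, Nat.mod_lt _ hm, ?_⟩
  have hq : a % m < m := Nat.mod_lt _ hm
  have h3 : a + (m + k - a % m) % m ≡ a % m + (m + k - a % m) [MOD m] :=
    (Nat.mod_modEq a m).symm.add (Nat.mod_modEq _ m)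
  have h4 : a % m + (m + k - a % m) = m + k := by omega
  rw [h4] at h3
  rw [Nat.ModEq] at h3
  rw [h3, Nat.add_mod_left, Nat.mod_eq_of_lt hk]

variable {b m : ℕ} {A : Finset ℕ}

lemma ee_inj {j k : ℕ} (h : ee b j = ee b k) : j = k := by
  simp only [ee] at h; omega

lemma ee_notMem (hA : ∀ x ∈ A, x ≤ b) (j : ℕ) : ee b j ∉ A := by
  intro h
  have := hA _ h
  simp only [ee] at this; omega

lemma mem_P {a j x : ℕ} :
    x ∈ P b m A a j ↔ x ∈ A ∨ ∃ r < j, x = ee b ((a + r) % m) := by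
  simp [P, eq_comm]

lemma ee_mem_P (hA : ∀ x ∈ A, x ≤ b) {a j k : ℕ} :
    ee b k ∈ P b m A a j ↔ ∃ r < j, (a + r) % m = k := by
  rw [mem_P]
  constructor
  · rintro (h | ⟨r, hr, h⟩)
    · exact absurd h (ee_notMem hA k)
    · exact ⟨r, hr, ee_inj h.symm⟩
  · rintro ⟨r, hr, h⟩
    exact Or.inr ⟨r, hr, by rw [h]⟩

lemma card_P (hA : ∀ x ∈ A, x ≤ b) {a j : ℕ} (hj : j ≤ m) :
    (P b m A a j).card = A.card + j := by
  have hdisj : Disjoint A ((Finset.range j).image (fun r => ee b ((a + r) % m))) := by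
    rw [disjoint_right]
    intro x hx hx'
    simp only [mem_image, mem_range] at hx
    obtain ⟨r, _, rfl⟩ := hx
    exact ee_notMem hA _ hx'
  rw [P, card_union_of_disjoint hdisj, card_image_of_injOn, card_range]
  intro r hr r' hr' h
  simp only [mem_coe, mem_range] at hr hr'
  exact mod_cancel (by omega) (by omega) (ee_inj h)

lemma P_zero (a : ℕ) : P b m A a 0 = A := by simp [P]

lemma P_mono (a : ℕ) {j j' : ℕ} (h : j ≤ j') : P b m A a j ⊆ P b m A a j' := by
  apply union_subset_union_right
  apply image_subset_image
  exact range_subset_range.mpr h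

lemma P_top (hA : ∀ x ∈ A, x ≤ b) (hm : 1 ≤ m) (a : ℕ) :
    P b m A a m = A ∪ Finset.Icc (b + 1) (b + m) := by
  unfold P
  congr 1
  ext x
  simp only [mem_image, mem_range, mem_Icc]
  constructor
  · rintro ⟨r, hr, rfl⟩
    have : (a + r) % m < m := Nat.mod_lt _ (by omega)
    simp only [ee]; omega
  · intro hx
    obtain ⟨r, hr, hr2⟩ := mod_solve (by omega) (show x - b - 1 < m by omega) a
    exact ⟨r, hr, by simp only [ee]; omega⟩

lemma P_inj (hA : ∀ x ∈ A, x ≤ b) {a j j' : ℕ} (hj : j ≤ m) (hj' : j' ≤ m)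
    (h : P b m A a j = P b m A a j') : j = j' := by
  have := card_P hA hj (a := a)
  rw [h, card_P hA hj'] at this
  omega

lemma isCompleteChain_Ch (hA : ∀ x ∈ A, x ≤ b) (hm : 1 ≤ m) (a : ℕ) :
    IsCompleteChain A (A ∪ Finset.Icc (b + 1) (b + m)) (Ch b m A a) := by
  have hmem : ∀ j ≤ m, P b m A a j ∈ Ch b m A a := fun j hj =>
    mem_image_of_mem _ (mem_range.mpr (by omega))
  have hform : ∀ X ∈ Ch b m A a, ∃ j ≤ m, X = P b m A a j := by
    intro X hX
    simp only [Ch, mem_image, mem_range] at hX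
    obtain ⟨j, hj, rfl⟩ := hX
    exact ⟨j, by omega, rfl⟩
  refine ⟨?_, ?_, ?_, ?_, ?_⟩
  · simp only [Ch, mem_image, mem_range]
    exact ⟨0, by omega, P_zero a⟩
  · simp only [Ch, mem_image, mem_range]
    exact ⟨m, by omega, P_top hA hm a⟩
  · intro X hX
    obtain ⟨j, hj, rfl⟩ := hform X hX
    constructor
    · intro x hx; exact mem_P.mpr (Or.inl hx)
    · exact P_top hA hm a ▸ P_mono a hj
  · intro X hX Y hY
    obtain ⟨j, hj, rfl⟩ := hform X hX
    obtain ⟨j', hj', rfl⟩ := hform Y hY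
    rcases le_total j j' with h | h
    · exact Or.inl (P_mono a h)
    · exact Or.inr (P_mono a h)
  · have hBA : (A ∪ Finset.Icc (b + 1) (b + m)) \ A = Finset.Icc (b + 1) (b + m) := by
      ext x
      simp only [mem_sdiff, mem_union, mem_Icc]
      constructor
      · rintro ⟨h | h, h2⟩
        · exact absurd h h2
        · exact h
      · intro h
        refine ⟨Or.inr h, fun hx => ?_⟩
        have := hA _ hx
        omega
    rw [hBA, Nat.card_Icc]
    have : (Ch b m A a).card = m + 1 := by
      rw [Ch, card_image_of_injOn, card_range]
      intro j hj j' hj' h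
      simp only [mem_coe, mem_range] at hj hj'
      exact P_inj hA (by omega) (by omega) h
    rw [this]
    omega



lemma start_mem_P (hA : ∀ x ∈ A, x ≤ b) {a j : ℕ} (hj : 1 ≤ j) :
    ee b (a % m) ∈ P b m A a j :=
  (ee_mem_P hA).mpr ⟨0, by omega, by rw [Nat.add_zero]⟩

lemma pred_notMem_P (hA : ∀ x ∈ A, x ≤ b) (hm : 1 ≤ m) {a j : ℕ} (hj : j ≤ m - 1) :
    ee b ((a + (m - 1)) % m) ∉ P b m A a j := by
  rw [ee_mem_P hA]
  rintro ⟨r, hr, h⟩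
  have := mod_cancel (show r < m by omega) (show m - 1 < m by omega) h
  omega

lemma Ch_inter (hA : ∀ x ∈ A, x ≤ b) (hm : 1 ≤ m) {a a' : ℕ} (hne : a % m ≠ a' % m) :
    Ch b m A a ∩ Ch b m A a' = {A, A ∪ Finset.Icc (b + 1) (b + m)} := by
  ext X
  simp only [mem_inter, mem_insert, mem_singleton]
  constructor
  · rintro ⟨h1, h2⟩
    simp only [Ch, mem_image, mem_range] at h1 h2
    obtain ⟨j, hj, rfl⟩ := h1
    obtain ⟨j', hj', hEq⟩ := h2
    have hjle : j ≤ m := by omega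
    have hj'le : j' ≤ m := by omega
    have hcard : j' = j := by
      have h5 := card_P hA hj'le (a := a')
      rw [hEq, card_P hA hjle] at h5
      omega
    subst hcard
    rcases Nat.eq_zero_or_pos j' with h0 | hpos
    · subst h0; exact Or.inl (P_zero a)
    rcases eq_or_lt_of_le hjle with rfl | hlt
    · exact Or.inr (P_top hA hm a)
    exfalso
    have hmem1 : ee b (a' % m) ∈ P b m A a j' := hEq ▸ start_mem_P hA hpos
    rw [ee_mem_P hA] at hmem1
    obtain ⟨r, hr, hrEq⟩ := hmem1
    rcases Nat.eq_zero_or_pos r with rfl | hrpos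
    · rw [Nat.add_zero] at hrEq
      exact hne hrEq
    · have hkey : (a + (r - 1)) % m = (a' + (m - 1)) % m := by
        calc (a + (r - 1)) % m = ((a + (r - 1)) + m) % m := (Nat.add_mod_right _ _).symm
          _ = ((a + r) + (m - 1)) % m := by congr 1; omega
          _ = (a' + (m - 1)) % m := Nat.ModEq.add_right (m - 1) hrEq
      have hmem2 : ee b ((a' + (m - 1)) % m) ∈ P b m A a' j' := by
        rw [hEq, ee_mem_P hA]
        exact ⟨r - 1, by omega, hkey⟩
      exact pred_notMem_P hA hm (by omega) hmem2
  · have hA' : A ∈ Ch b m A a ∩ Ch b m A a' := by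
      simp only [mem_inter, Ch, mem_image, mem_range]
      exact ⟨⟨0, by omega, P_zero a⟩, ⟨0, by omega, P_zero a'⟩⟩
    have hB' : A ∪ Finset.Icc (b + 1) (b + m) ∈ Ch b m A a ∩ Ch b m A a' := by
      simp only [mem_inter, Ch, mem_image, mem_range]
      exact ⟨⟨m, by omega, P_top hA hm a⟩, ⟨m, by omega, P_top hA hm a'⟩⟩
    rintro (rfl | rfl)
    · exact mem_inter.mp hA'
    · exact mem_inter.mp hB'

lemma card_B (hA : ∀ x ∈ A, x ≤ b) :
    (A ∪ Finset.Icc (b + 1) (b + m)).card = A.card + m := by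
  rw [card_union_of_disjoint, Nat.card_Icc]
  · omega
  · rw [disjoint_left]
    intro x hx hx'
    rw [mem_Icc] at hx'
    have := hA _ hx
    omega

lemma lanternUnion (hA : ∀ x ∈ A, x ≤ b) (hm : 1 ≤ m) {k : ℕ} (st : Fin k → ℕ)
    (hst : ∀ i j : Fin k, i ≠ j → st i % m ≠ st j % m) :
    IsLanternUnion A (A ∪ Finset.Icc (b + 1) (b + m)) k
      (Finset.univ.biUnion fun i => Ch b m A (st i)) :=
  ⟨fun i => Ch b m A (st i), fun _ => isCompleteChain_Ch hA hm _,
   fun i j hij => Ch_inter hA hm (hst i j hij), rfl⟩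

lemma mem_lastInc (hA : ∀ x ∈ A, x ≤ b) (hm : 1 ≤ m) {k : ℕ} (st : Fin k → ℕ) (x : ℕ) :
    x ∈ lastIncrementSet (A ∪ Finset.Icc (b + 1) (b + m))
        (Finset.univ.biUnion fun i => Ch b m A (st i))
      ↔ ∃ i : Fin k, x = ee b ((st i + (m - 1)) % m) := by
  rw [lastIncrementSet, mem_filter, card_B hA]
  constructor
  · rintro ⟨hxB, X, hXL, hXcard, hxX⟩
    simp only [mem_biUnion, mem_univ, true_and] at hXL
    obtain ⟨i, hXi⟩ := hXL
    simp only [Ch, mem_image, mem_range] at hXi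
    obtain ⟨j, hj, rfl⟩ := hXi
    rw [card_P hA (by omega)] at hXcard
    have hjm : j = m - 1 := by omega
    subst hjm
    refine ⟨i, ?_⟩
    rcases mem_union.mp hxB with hxA | hxI
    · exact absurd (mem_P.mpr (Or.inl hxA)) hxX
    · rw [mem_Icc] at hxI
      have hxe : x = ee b (x - b - 1) := by simp only [ee]; omega
      rw [hxe] at hxX
      rw [ee_mem_P hA] at hxX
      push_neg at hxX
      obtain ⟨r, hr, hrEq⟩ := mod_solve (by omega) (show x - b - 1 < m by omega) (st i)
      have hrm : r = m - 1 := by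
        by_contra hne'
        exact hxX r (by omega) hrEq
      subst hrm
      rw [hxe, ← hrEq]
  · rintro ⟨i, rfl⟩
    have hlt : (st i + (m - 1)) % m < m := Nat.mod_lt _ (by omega)
    refine ⟨mem_union_right _ (mem_Icc.mpr ⟨by simp only [ee]; omega, by simp only [ee]; omega⟩),
      P b m A (st i) (m - 1), ?_, ?_, pred_notMem_P hA hm le_rfl⟩
    · simp only [mem_biUnion, mem_univ, true_and]
      exact ⟨i, mem_image_of_mem _ (mem_range.mpr (by omega))⟩
    · rw [card_P hA (by omega)]
      omega

lemma mem_firstInc (hA : ∀ x ∈ A, x ≤ b) (hm : 1 ≤ m) {k : ℕ} (st : Fin k → ℕ) (x : ℕ) :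
    x ∈ firstIncrementSet A (Finset.univ.biUnion fun i => Ch b m A (st i))
      ↔ ∃ i : Fin k, x = ee b (st i % m) := by
  rw [firstIncrementSet, mem_sdiff, Finset.mem_sup]
  simp only [mem_filter, mem_biUnion, mem_univ, true_and, id]
  constructor
  · rintro ⟨⟨X, ⟨⟨i, hXi⟩, hXcard⟩, hxX⟩, hxA⟩
    simp only [Ch, mem_image, mem_range] at hXi
    obtain ⟨j, hj, rfl⟩ := hXi
    rw [card_P hA (by omega)] at hXcard
    have hj1 : j = 1 := by omega
    subst hj1
    rcases mem_P.mp hxX with h | ⟨r, hr, rfl⟩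
    · exact absurd h hxA
    · refine ⟨i, ?_⟩
      have hr0 : r = 0 := by omega
      subst hr0
      rw [Nat.add_zero]
  · rintro ⟨i, rfl⟩
    refine ⟨⟨P b m A (st i) 1, ⟨⟨i, ?_⟩, ?_⟩, ?_⟩, ee_notMem hA _⟩
    · exact mem_image_of_mem _ (mem_range.mpr (by omega))
    · rw [card_P hA hm]
    · exact start_mem_P hA (by omega)

lemma mod_eq_cancel {x y m : ℕ} (hx : 1 ≤ x) (hx2 : x ≤ m) (hy : 1 ≤ y) (hy2 : y ≤ m)
    (h : x % m = y % m) : x = y := by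
  rcases eq_or_lt_of_le hx2 with rfl | hx3
  · rw [Nat.mod_self] at h
    rcases eq_or_lt_of_le hy2 with rfl | hy3
    · rfl
    · rw [Nat.mod_eq_of_lt hy3] at h; omega
  · rw [Nat.mod_eq_of_lt hx3] at h
    rcases eq_or_lt_of_le hy2 with rfl | hy3
    · rw [Nat.mod_self] at h; omega
    · rw [Nat.mod_eq_of_lt hy3] at h; omega

end Stmt4

/-- For `s ≥ t ≥ 2`, `n ≥ 2s + t - 1` and any `A ⊆ [s+t]`, an
upper `s`-lantern and a lower `t`-lantern on `A` exist. -/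
theorem stmt4 (n s t : ℕ) (hts : t ≤ s) (ht : 2 ≤ t) (hn : 2*s + t - 1 ≤ n)
    (A : Finset ℕ) (hA : A ⊆ Finset.Icc 1 (s+t)) :
    (∃ L : Finset (Finset ℕ), IsUpperLantern n s t A L) ∧
    (∃ L : Finset (Finset ℕ), IsLowerLantern n s t A L) := by
  have hA' : ∀ x ∈ A, x ≤ s + t := fun x hx => (Finset.mem_Icc.mp (hA hx)).2
  have hm : 1 ≤ n - (s + t) := by omega
  have hms : s - 1 ≤ n - (s + t) := by omega
  have hIcc : Finset.Icc (s+t+1) n = Finset.Icc ((s+t) + 1) ((s+t) + (n - (s+t))) := by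
    congr 1
    omega
  constructor
  · refine ⟨Finset.univ.biUnion fun i : Fin (s-1) =>
      Stmt4.Ch (s+t) (n - (s+t)) A ((i : ℕ) + 1), ?_, ?_⟩
    · rw [IsLanternUnion] at *
      rw [hIcc]
      exact Stmt4.lanternUnion hA' hm (fun i : Fin (s-1) => (i : ℕ) + 1)
        (by
          intro i j hij h
          apply hij
          have hi := i.isLt
          have hj := j.isLt
          have := Stmt4.mod_eq_cancel (x := (i : ℕ) + 1) (y := (j : ℕ) + 1)
            (by omega) (by omega) (by omega) (by omega) h
          exact Fin.ext (by omega))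
    · rw [hIcc]
      ext x
      rw [Stmt4.mem_lastInc hA' hm, Finset.mem_Icc]
      constructor
      · rintro ⟨i, rfl⟩
        have hi := i.isLt
        have h1 : ((i : ℕ) + 1 + (n - (s+t) - 1)) % (n - (s+t)) = (i : ℕ) := by
          have h2 : (i : ℕ) + 1 + (n - (s+t) - 1) = (i : ℕ) + (n - (s+t)) := by omega
          rw [h2, Nat.add_mod_right, Nat.mod_eq_of_lt (by omega)]
        rw [h1]
        simp only [Stmt4.ee]
        omega
      · intro hx
        refine ⟨⟨x - (s+t) - 1, by omega⟩, ?_⟩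
        have h1 : ((x - (s+t) - 1) + 1 + (n - (s+t) - 1)) % (n - (s+t)) = x - (s+t) - 1 := by
          have h2 : (x - (s+t) - 1) + 1 + (n - (s+t) - 1) = (x - (s+t) - 1) + (n - (s+t)) := by
            omega
          rw [h2, Nat.add_mod_right, Nat.mod_eq_of_lt (by omega)]
        show x = Stmt4.ee (s+t) _
        rw [h1]
        simp only [Stmt4.ee]
        omega
  · refine ⟨Finset.univ.biUnion fun i : Fin (t-1) =>
      Stmt4.Ch (s+t) (n - (s+t)) A (i : ℕ), ?_, ?_⟩
    · rw [hIcc]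
      exact Stmt4.lanternUnion hA' hm (fun i : Fin (t-1) => (i : ℕ))
        (by
          intro i j hij h
          apply hij
          have hi := i.isLt
          have hj := j.isLt
          have h' : (i : ℕ) % (n - (s+t)) = (j : ℕ) % (n - (s+t)) := h
          rw [Nat.mod_eq_of_lt (by omega), Nat.mod_eq_of_lt (by omega)] at h'
          exact Fin.ext h')
    · ext x
      rw [Stmt4.mem_firstInc hA' hm, Finset.mem_Icc]
      constructor
      · rintro ⟨i, rfl⟩
        have hi := i.isLt
        rw [Nat.mod_eq_of_lt (by omega)]
        simp only [Stmt4.ee]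
        omega
      · intro hx
        refine ⟨⟨x - (s+t) - 1, by omega⟩, ?_⟩
        show x = Stmt4.ee (s+t) _
        rw [Nat.mod_eq_of_lt (by omega)]
        simp only [Stmt4.ee]
        omega
end

section
/- Let s ≥ t ≥ 2, n ≥ 2s + t − 1, and let F' = F_1 ∪ F_2 ∪ F_3 ∪ F_4 be the lantern construction. If F_1, …, F_s ∈ F' are pairwise incomparable under inclusion, then |⋂_{i=1}^{s} (F_i ∩ [s+t−1])| < t. -/
/-- `F₁ = {[n]} ∪ {[n] \ {x} : x ∈ [s+t-1]}`. -/
def lanternF1 (n s t : ℕ) : Finset (Finset ℕ) :=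
  insert (Finset.Icc 1 n) ((Finset.Icc 1 (s+t-1)).image fun x => (Finset.Icc 1 n).erase x)

/-- `F₂`: union over all `t`-element subsets `A` of `[s+t-1]` of the chosen upper lantern `Ls A`. -/
def lanternF2 (s t : ℕ) (Ls : Finset ℕ → Finset (Finset ℕ)) : Finset (Finset ℕ) :=
  (Finset.powersetCard t (Finset.Icc 1 (s+t-1))).biUnion Ls

/-- `F₃`: union over all `(t-1)`-element subsets `A` of `[s+t-1]` of the chosen
lower lantern `Lt (A ∪ {s+t})`. -/
def lanternF3 (s t : ℕ) (Lt : Finset ℕ → Finset (Finset ℕ)) : Finset (Finset ℕ) :=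
  (Finset.powersetCard (t-1) (Finset.Icc 1 (s+t-1))).biUnion fun A => Lt (insert (s+t) A)

/-- `F₄ = {∅} ∪ {{x} : x ∈ [s+t-1]}`. -/
def lanternF4 (s t : ℕ) : Finset (Finset ℕ) :=
  insert ∅ ((Finset.Icc 1 (s+t-1)).image fun x => ({x} : Finset ℕ))

/-- The lantern construction `F' = F₁ ∪ F₂ ∪ F₃ ∪ F₄`. -/
def lanternFam (n s t : ℕ) (Ls Lt : Finset ℕ → Finset (Finset ℕ)) : Finset (Finset ℕ) :=
  lanternF1 n s t ∪ lanternF2 s t Ls ∪ lanternF3 s t Lt ∪ lanternF4 s t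


lemma lanternUnion_mem_subset {A B : Finset ℕ} {k : ℕ} {L : Finset (Finset ℕ)}
    (h : IsLanternUnion A B k L) {X : Finset ℕ} (hX : X ∈ L) : A ⊆ X ∧ X ⊆ B := by
  obtain ⟨C, hC, -, rfl⟩ := h
  obtain ⟨c, -, hc⟩ := Finset.mem_biUnion.1 hX
  exact (hC c).2.2.1 X hc

/-- any `s` pairwise incomparable members of the lantern
construction `F'` have `|⋂ᵢ (Fᵢ ∩ [s+t-1])| < t`. -/
theorem stmt5
    (n s t : ℕ) (hts : t ≤ s) (ht : 2 ≤ t) (hn : 2*s + t - 1 ≤ n)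
    (Ls Lt : Finset ℕ → Finset (Finset ℕ))
    (hLs : ∀ A ∈ Finset.powersetCard t (Finset.Icc 1 (s+t-1)),
      IsUpperLantern n s t A (Ls A))
    (hLt : ∀ A ∈ Finset.powersetCard (t-1) (Finset.Icc 1 (s+t-1)),
      IsLowerLantern n s t (insert (s+t) A) (Lt (insert (s+t) A)))
    (G : Fin s → Finset ℕ)
    (hG : ∀ i, G i ∈ lanternFam n s t Ls Lt)
    (hinc : ∀ i j, i ≠ j → ¬ G i ⊆ G j) :
    ((Finset.Icc 1 (s+t-1)).filter fun x => ∀ i, x ∈ G i).card < t := by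
  by_contra hcard
  push_neg at hcard
  obtain ⟨T, hTsub, hTcard⟩ := Finset.exists_subset_card_eq hcard
  have hTIcc : T ⊆ Finset.Icc 1 (s+t-1) := hTsub.trans (Finset.filter_subset _ _)
  have hTG : ∀ i, T ⊆ G i := fun i y hy => (Finset.mem_filter.1 (hTsub hy)).2 i
  have hs2 : 2 ≤ s := ht.trans hts
  have hstn : s + t + 1 ≤ n := by omega
  have hTbd : ∀ y ∈ T, 1 ≤ y ∧ y ≤ s+t-1 := fun y hy => Finset.mem_Icc.1 (hTIcc hy)
  -- every member of the family is ⊆ Icc 1 n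
  have hsub : ∀ F ∈ lanternFam n s t Ls Lt, F ⊆ Finset.Icc 1 n := by
    intro F hF
    rcases Finset.mem_union.1 hF with hF | hF4
    rcases Finset.mem_union.1 hF with hF | hF3
    rcases Finset.mem_union.1 hF with hF1 | hF2
    · rcases Finset.mem_insert.1 hF1 with rfl | hF1
      · exact subset_rfl
      · obtain ⟨x, -, rfl⟩ := Finset.mem_image.1 hF1
        exact Finset.erase_subset _ _
    · obtain ⟨A, hA, hFA⟩ := Finset.mem_biUnion.1 hF2
      obtain ⟨hAsub, hAcard⟩ := Finset.mem_powersetCard.1 hA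
      have := (lanternUnion_mem_subset (hLs A hA).1 hFA).2
      refine this.trans (Finset.union_subset ?_ ?_)
      · exact hAsub.trans (Finset.Icc_subset_Icc_right (by omega))
      · exact Finset.Icc_subset_Icc_left (by omega)
    · obtain ⟨A, hA, hFA⟩ := Finset.mem_biUnion.1 hF3
      obtain ⟨hAsub, hAcard⟩ := Finset.mem_powersetCard.1 hA
      have := (lanternUnion_mem_subset (hLt A hA).1 hFA).2
      refine this.trans (Finset.union_subset ?_ ?_)
      · refine Finset.insert_subset (Finset.mem_Icc.2 ⟨by omega, by omega⟩) ?_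
        exact hAsub.trans (Finset.Icc_subset_Icc_right (by omega))
      · exact Finset.Icc_subset_Icc_left (by omega)
    · rcases Finset.mem_insert.1 hF4 with rfl | hF4
      · exact Finset.empty_subset _
      · obtain ⟨x, hx, rfl⟩ := Finset.mem_image.1 hF4
        have := Finset.mem_Icc.1 hx
        exact Finset.singleton_subset_iff.2 (Finset.mem_Icc.2 ⟨by omega, by omega⟩)
  have hTmem : T ∈ Finset.powersetCard t (Finset.Icc 1 (s+t-1)) :=
    Finset.mem_powersetCard.2 ⟨hTIcc, hTcard⟩
  obtain ⟨C, hC, -, hLeq⟩ := (hLs T hTmem).1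
  -- classification
  have key : ∀ i, (∃ x, x ∈ Finset.Icc 1 (s+t-1) ∧ x ∉ T ∧ G i = (Finset.Icc 1 n).erase x)
      ∨ (∃ c : Fin (s-1), G i ∈ C c) := by
    intro i
    have hGi := hG i
    rcases Finset.mem_union.1 hGi with hF | hF4
    rcases Finset.mem_union.1 hF with hF | hF3
    rcases Finset.mem_union.1 hF with hF1 | hF2
    · rcases Finset.mem_insert.1 hF1 with hGn | hF1
      · -- G i = [n] : contradiction with some other j
        obtain ⟨j, hj⟩ := Fintype.exists_ne_of_one_lt_card (by simp; omega) i
        exact absurd (hGn ▸ hsub _ (hG j)) (hinc j i hj)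
      · obtain ⟨x, hx, hGx⟩ := Finset.mem_image.1 hF1
        by_cases hxT : x ∈ T
        · have : x ∈ G i := hTG i hxT
          rw [← hGx] at this
          exact absurd this (Finset.notMem_erase _ _)
        · exact Or.inl ⟨x, hx, hxT, hGx.symm⟩
    · -- upper lantern
      obtain ⟨A, hA, hFA⟩ := Finset.mem_biUnion.1 hF2
      obtain ⟨hAsub, hAcard⟩ := Finset.mem_powersetCard.1 hA
      obtain ⟨-, hup⟩ := lanternUnion_mem_subset (hLs A hA).1 hFA
      have hTA : T ⊆ A := by
        intro y hy
        rcases Finset.mem_union.1 (hup (hTG i hy)) with h | h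
        · exact h
        · have := Finset.mem_Icc.1 h
          have := hTbd y hy
          omega
      have : T = A := Finset.eq_of_subset_of_card_le hTA (by omega)
      subst this
      rw [hLeq] at hFA
      obtain ⟨c, -, hc⟩ := Finset.mem_biUnion.1 hFA
      exact Or.inr ⟨c, hc⟩
    · -- lower lantern : impossible
      obtain ⟨A, hA, hFA⟩ := Finset.mem_biUnion.1 hF3
      obtain ⟨hAsub, hAcard⟩ := Finset.mem_powersetCard.1 hA
      obtain ⟨-, hup⟩ := lanternUnion_mem_subset (hLt A hA).1 hFA
      have hTA : T ⊆ A := by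
        intro y hy
        have hyb := hTbd y hy
        rcases Finset.mem_union.1 (hup (hTG i hy)) with h | h
        · rcases Finset.mem_insert.1 h with rfl | h
          · omega
          · exact h
        · have := Finset.mem_Icc.1 h; omega
      have := Finset.card_le_card hTA
      omega
    · -- F4 : impossible
      rcases Finset.mem_insert.1 hF4 with hGe | hF4
      · have h0 : T ⊆ (∅ : Finset ℕ) := by rw [← hGe]; exact hTG i
        have := Finset.card_le_card h0
        simp only [Finset.card_empty, Nat.le_zero] at this; omega
      · obtain ⟨x, -, hGx⟩ := Finset.mem_image.1 hF4
        have h1 : T ⊆ {x} := by rw [hGx]; exact hTG i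
        have := Finset.card_le_card h1
        simp only [Finset.card_singleton] at this; omega
  -- the top of the lantern chains
  set B := T ∪ Finset.Icc (s+t+1) n with hB
  have hchain : ∀ c : Fin (s-1), ∀ X ∈ C c, T ⊆ X ∧ X ⊆ B := fun c => (hC c).2.2.1
  by_cases hP : ∃ i x, x ∈ Finset.Icc 1 (s+t-1) ∧ x ∉ T ∧ G i = (Finset.Icc 1 n).erase x
  · obtain ⟨i, x, hxI, hxT, hGi⟩ := hP
    have hxb := Finset.mem_Icc.1 hxI
    by_cases hQ : ∃ j c, G j ∈ C c
    · obtain ⟨j, c, hjc⟩ := hQ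
      have hjB : G j ⊆ B := (hchain c _ hjc).2
      have hsubij : G j ⊆ G i := by
        rw [hGi]
        intro y hy
        rcases Finset.mem_union.1 (hjB hy) with h | h
        · have := hTbd y h
          exact Finset.mem_erase.2 ⟨fun he => hxT (he ▸ h), Finset.mem_Icc.2 ⟨by omega, by omega⟩⟩
        · have := Finset.mem_Icc.1 h
          exact Finset.mem_erase.2 ⟨by omega, Finset.mem_Icc.2 ⟨by omega, by omega⟩⟩
      have hij : j ≠ i := by
        rintro rfl
        have hst : s + t ∈ G j := by
          rw [hGi]
          exact Finset.mem_erase.2 ⟨by omega, Finset.mem_Icc.2 ⟨by omega, by omega⟩⟩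
        rcases Finset.mem_union.1 (hjB hst) with h | h
        · have := hTbd _ h; omega
        · have := Finset.mem_Icc.1 h; omega
      exact hinc j i hij hsubij
    · -- all P
      push_neg at hQ
      have hallP : ∀ i, ∃ x, x ∈ Finset.Icc 1 (s+t-1) ∧ x ∉ T ∧ G i = (Finset.Icc 1 n).erase x := by
        intro i
        rcases key i with h | ⟨c, hc⟩
        · exact h
        · exact absurd hc (hQ i c)
      choose f h1 h2 h3 using hallP
      have hinj : Set.InjOn f (Finset.univ : Finset (Fin s)) := by
        intro a _ b _ hab
        by_contra hne
        exact hinc a b hne (by rw [h3 a, h3 b, hab])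
      have hle : (Finset.univ : Finset (Fin s)).card ≤ (Finset.Icc 1 (s+t-1) \ T).card :=
        Finset.card_le_card_of_injOn f
          (fun a _ => Finset.mem_sdiff.2 ⟨h1 a, h2 a⟩) hinj
      rw [Finset.card_univ, Fintype.card_fin,
        Finset.card_sdiff_of_subset hTIcc, Nat.card_Icc, hTcard] at hle
      omega
  · -- all Q
    push_neg at hP
    have hallQ : ∀ i, ∃ c : Fin (s-1), G i ∈ C c := by
      intro i
      rcases key i with ⟨x, hxI, hxT, hGi⟩ | h
      · exact absurd hGi (hP i x hxI hxT)
      · exact h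
    choose f hf using hallQ
    have hinj : Set.InjOn f (Finset.univ : Finset (Fin s)) := by
      intro a _ b _ hab
      by_contra hne
      have := (hC (f a)).2.2.2.1 (G a) (hf a) (G b) (hab ▸ hf b)
      rcases this with h | h
      · exact hinc a b hne h
      · exact hinc b a (Ne.symm hne) h
    have hle : (Finset.univ : Finset (Fin s)).card ≤ (Finset.univ : Finset (Fin (s-1))).card :=
      Finset.card_le_card_of_injOn f (fun a _ => Finset.mem_univ _) hinj
    simp only [Finset.card_univ, Fintype.card_fin] at hle
    omega
end

section
/- Let s ≥ t ≥ 2, n ≥ 2s + t − 1, and let F' = F_1 ∪ F_2 ∪ F_3 ∪ F_4 be the lantern construction. Then F' is induced K_{s,t}-free. -/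
open Finset

/-- A family of finite sets contains an induced copy of the complete bipartite
poset `K_{s,t}`: `s` pairwise incomparable "upper" sets and `t` pairwise
incomparable "lower" sets, each lower set strictly contained in each upper set. -/
def ContainsIndKst (s t : ℕ) (F : Finset (Finset ℕ)) : Prop :=
  ∃ (U : Fin s → Finset ℕ) (D : Fin t → Finset ℕ),
    (∀ i, U i ∈ F) ∧ (∀ j, D j ∈ F) ∧
    (∀ i j, i ≠ j → ¬ U i ⊆ U j) ∧
    (∀ i j, i ≠ j → ¬ D i ⊆ D j) ∧
    (∀ i j, D j ⊂ U i)

/-- `F ⊆ 2^[n]` is induced `K_{s,t}`-saturated. -/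
def IsIndKstSaturated (n s t : ℕ) (F : Finset (Finset ℕ)) : Prop :=
  (∀ A ∈ F, A ⊆ Finset.Icc 1 n) ∧
  ¬ ContainsIndKst s t F ∧
  ∀ G ⊆ Finset.Icc 1 n, G ∉ F → ContainsIndKst s t (insert G F)

/-- `sat*(n, K_{s,t})`: minimum size of an induced `K_{s,t}`-saturated family in `2^[n]`. -/
noncomputable def satStarKst (n s t : ℕ) : ℕ :=
  sInf {m | ∃ F : Finset (Finset ℕ), IsIndKstSaturated n s t F ∧ F.card = m}

lemma lantern_mem_bounds {A B : Finset ℕ} {k : ℕ} {L : Finset (Finset ℕ)}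
    (hL : IsLanternUnion A B k L) {X : Finset ℕ} (hX : X ∈ L) : A ⊆ X ∧ X ⊆ B := by
  obtain ⟨C, hC, -, rfl⟩ := hL
  simp only [Finset.mem_biUnion] at hX
  obtain ⟨i, -, hXi⟩ := hX
  exact (hC i).2.2.1 X hXi

lemma lantern_pigeonhole {A B : Finset ℕ} {k m : ℕ} {L : Finset (Finset ℕ)}
    (hL : IsLanternUnion A B k L) (f : Fin m → Finset ℕ) (hf : ∀ i, f i ∈ L)
    (hinc : ∀ i j, i ≠ j → ¬ f i ⊆ f j) (hkm : k < m) : False := by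
  obtain ⟨C, hC, -, rfl⟩ := hL
  have hg : ∀ i : Fin m, ∃ c : Fin k, f i ∈ C c := by
    intro i
    have := hf i
    simp only [Finset.mem_biUnion] at this
    obtain ⟨c, -, hc⟩ := this
    exact ⟨c, hc⟩
  choose g hg using hg
  have hcard : Fintype.card (Fin k) < Fintype.card (Fin m) := by simpa using hkm
  obtain ⟨i, j, hne, hij⟩ := Fintype.exists_ne_map_eq_of_card_lt g hcard
  rcases (hC (g i)).2.2.2.1 (f i) (hg i) (f j) (by rw [hij]; exact hg j) with h | h
  · exact hinc i j hne h
  · exact hinc j i (Ne.symm hne) h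

/-- The common ending for the "lower lantern" cases: all `t` lower sets lie in a
single lower lantern (t-1 chains: pigeonhole) or are singletons inside a
(t-1)-element set (pigeonhole again). -/
lemma lowerEnd (n s t : ℕ) (ht : 2 ≤ t) (Lt : Finset ℕ → Finset (Finset ℕ))
    (A : Finset ℕ) (hA : A ∈ Finset.powersetCard (t-1) (Finset.Icc 1 (s+t-1)))
    (hlan : IsLowerLantern n s t (insert (s+t) A) (Lt (insert (s+t) A)))
    (D : Fin t → Finset ℕ)
    (hDinc : ∀ i j, i ≠ j → ¬ D i ⊆ D j)
    (hcl : ∀ j, D j ∈ Lt (insert (s+t) A) ∨ ∃ x ∈ A, D j = {x}) : False := by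
  obtain ⟨hlu, -⟩ := hlan
  obtain ⟨-, hAcard⟩ := Finset.mem_powersetCard.mp hA
  by_cases h : ∃ j0, D j0 ∈ Lt (insert (s+t) A)
  · obtain ⟨j0, hj0⟩ := h
    have hall : ∀ j, D j ∈ Lt (insert (s+t) A) := by
      intro j
      by_cases hj : D j ∈ Lt (insert (s+t) A)
      · exact hj
      rcases hcl j with h1 | ⟨x, hx, hDj⟩
      · exact absurd h1 hj
      exfalso
      have hne : j ≠ j0 := fun e => hj (e ▸ hj0)
      refine hDinc j j0 hne ?_
      have hb := (lantern_mem_bounds hlu hj0).1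
      rw [hDj]
      intro y hy
      rw [Finset.mem_singleton] at hy
      subst hy
      exact hb (Finset.mem_insert_of_mem hx)
    exact lantern_pigeonhole hlu D hall hDinc (by omega)
  · push_neg at h
    have hall : ∀ j, ∃ x, x ∈ A ∧ D j = {x} := by
      intro j
      rcases hcl j with h1 | ⟨x, hx, e⟩
      · exact absurd h1 (h j)
      · exact ⟨x, hx, e⟩
    choose f hfA hfe using hall
    have hinj : Function.Injective f := by
      intro a b hab
      by_contra hne
      exact hDinc a b hne (by rw [hfe a, hfe b, hab])
    have h1 : (Finset.univ.image f).card = t := by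
      rw [Finset.card_image_of_injective _ hinj, Finset.card_univ, Fintype.card_fin]
    have h2 : Finset.univ.image f ⊆ A := by
      intro x hx
      simp only [Finset.mem_image, Finset.mem_univ, true_and] at hx
      obtain ⟨a, rfl⟩ := hx
      exact hfA a
    have h3 := Finset.card_le_card h2
    omega

/-- The common ending for the "upper lantern" case: all `s` upper sets lie in a
single upper lantern (s-1 chains: pigeonhole) or are complements of singletons
avoiding a `t`-element set (pigeonhole again). -/
lemma upperEnd (n s t : ℕ) (hts : t ≤ s) (ht : 2 ≤ t) (hn : 2*s + t - 1 ≤ n)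
    (Ls : Finset ℕ → Finset (Finset ℕ))
    (A : Finset ℕ) (hA : A ∈ Finset.powersetCard t (Finset.Icc 1 (s+t-1)))
    (hlan : IsUpperLantern n s t A (Ls A))
    (U : Fin s → Finset ℕ)
    (hUinc : ∀ i j, i ≠ j → ¬ U i ⊆ U j)
    (hcl : ∀ i, U i ∈ Ls A ∨ ∃ x, x ∈ Finset.Icc 1 (s+t-1) ∧ x ∉ A ∧
        U i = (Finset.Icc 1 n).erase x) : False := by
  obtain ⟨hlu, -⟩ := hlan
  obtain ⟨hAsub, hAcard⟩ := Finset.mem_powersetCard.mp hA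
  by_cases h : ∃ i1, U i1 ∈ Ls A
  · obtain ⟨i1, hi1⟩ := h
    have hall : ∀ i, U i ∈ Ls A := by
      intro i
      by_cases hi : U i ∈ Ls A
      · exact hi
      rcases hcl i with h1 | ⟨x, hxP, hxA, hUe⟩
      · exact absurd h1 hi
      exfalso
      have hne : i1 ≠ i := fun e => hi (e ▸ hi1)
      refine hUinc i1 i hne ?_
      have hb := (lantern_mem_bounds hlu hi1).2
      rw [hUe]
      intro y hy
      have hy' := hb hy
      rw [Finset.mem_union] at hy'
      rw [Finset.mem_Icc] at hxP
      rw [Finset.mem_erase, Finset.mem_Icc]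
      rcases hy' with h' | h'
      · have := hAsub h'
        rw [Finset.mem_Icc] at this
        exact ⟨fun e => hxA (e ▸ h'), by omega⟩
      · rw [Finset.mem_Icc] at h'
        exact ⟨by omega, by omega⟩
    exact lantern_pigeonhole hlu U hall hUinc (by omega)
  · push_neg at h
    have hall : ∀ i, ∃ x, (x ∈ Finset.Icc 1 (s+t-1) ∧ x ∉ A) ∧
        U i = (Finset.Icc 1 n).erase x := by
      intro i
      rcases hcl i with h1 | ⟨x, h2, h3, h4⟩
      · exact absurd h1 (h i)
      · exact ⟨x, ⟨h2, h3⟩, h4⟩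
    choose f hf1 hf2 using hall
    have hinj : Function.Injective f := by
      intro a b hab
      by_contra hne
      exact hUinc a b hne (by rw [hf2 a, hf2 b, hab])
    have h1 : (Finset.univ.image f).card = s := by
      rw [Finset.card_image_of_injective _ hinj, Finset.card_univ, Fintype.card_fin]
    have h2 : Finset.univ.image f ⊆ (Finset.Icc 1 (s+t-1)) \ A := by
      intro x hx
      simp only [Finset.mem_image, Finset.mem_univ, true_and] at hx
      obtain ⟨a, rfl⟩ := hx
      exact Finset.mem_sdiff.mpr ⟨(hf1 a).1, (hf1 a).2⟩
    have h3 := Finset.card_le_card h2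
    rw [Finset.card_sdiff_of_subset hAsub, Nat.card_Icc] at h3
    omega

/-- the lantern construction `F'` is induced `K_{s,t}`-free. -/
theorem stmt7
    (n s t : ℕ) (hts : t ≤ s) (ht : 2 ≤ t) (hn : 2*s + t - 1 ≤ n)
    (Ls Lt : Finset ℕ → Finset (Finset ℕ))
    (hLs : ∀ A ∈ Finset.powersetCard t (Finset.Icc 1 (s+t-1)),
      IsUpperLantern n s t A (Ls A))
    (hLt : ∀ A ∈ Finset.powersetCard (t-1) (Finset.Icc 1 (s+t-1)),
      IsLowerLantern n s t (insert (s+t) A) (Lt (insert (s+t) A)))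
    : ¬ ContainsIndKst s t (lanternFam n s t Ls Lt) := by
  rintro ⟨U, D, hUm, hDm, hUinc, hDinc, hsub⟩
  have hs2 : 2 ≤ s := le_trans ht hts
  have i₀ : Fin s := ⟨0, by omega⟩
  have j₀ : Fin t := ⟨0, by omega⟩
  -- membership unfolding
  have hmem : ∀ X ∈ lanternFam n s t Ls Lt,
      (X = Finset.Icc 1 n ∨ ∃ x ∈ Finset.Icc 1 (s+t-1), (Finset.Icc 1 n).erase x = X) ∨
      (∃ A ∈ Finset.powersetCard t (Finset.Icc 1 (s+t-1)), X ∈ Ls A) ∨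
      (∃ A ∈ Finset.powersetCard (t-1) (Finset.Icc 1 (s+t-1)), X ∈ Lt (insert (s+t) A)) ∨
      (X = ∅ ∨ ∃ x ∈ Finset.Icc 1 (s+t-1), ({x} : Finset ℕ) = X) := by
    intro X hX
    simp only [lanternFam, lanternF1, lanternF2, lanternF3, lanternF4, Finset.mem_union,
      Finset.mem_insert, Finset.mem_image, Finset.mem_biUnion] at hX
    rcases hX with ((h | h) | h) | h
    · exact Or.inl h
    · exact Or.inr (Or.inl h)
    · exact Or.inr (Or.inr (Or.inl h))
    · exact Or.inr (Or.inr (Or.inr h))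
  -- lantern bounds
  have hLsB : ∀ A ∈ Finset.powersetCard t (Finset.Icc 1 (s+t-1)), ∀ X ∈ Ls A,
      A ⊆ X ∧ X ⊆ A ∪ Finset.Icc (s+t+1) n :=
    fun A hA X hX => lantern_mem_bounds (hLs A hA).1 hX
  have hLtB : ∀ A ∈ Finset.powersetCard (t-1) (Finset.Icc 1 (s+t-1)),
      ∀ X ∈ Lt (insert (s+t) A),
      insert (s+t) A ⊆ X ∧ X ⊆ insert (s+t) A ∪ Finset.Icc (s+t+1) n :=
    fun A hA X hX => lantern_mem_bounds (hLt A hA).1 hX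
  -- the family is bounded by [1, n]
  have hbound : ∀ X ∈ lanternFam n s t Ls Lt, X ⊆ Finset.Icc 1 n := by
    intro X hX
    rcases hmem X hX with (rfl | ⟨x, hx, he⟩) | ⟨A, hA, hm⟩ | ⟨A, hA, hm⟩ | (rfl | ⟨x, hx, he⟩)
    · exact Finset.Subset.refl _
    · rw [← he]; exact Finset.erase_subset _ _
    · refine ((hLsB A hA X hm).2).trans ?_
      intro y hy
      rcases Finset.mem_union.mp hy with h | h
      · have := (Finset.mem_powersetCard.mp hA).1 h
        rw [Finset.mem_Icc] at this ⊢; omega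
      · rw [Finset.mem_Icc] at h ⊢; omega
    · refine ((hLtB A hA X hm).2).trans ?_
      intro y hy
      rcases Finset.mem_union.mp hy with h | h
      · rcases Finset.mem_insert.mp h with rfl | h'
        · rw [Finset.mem_Icc]; omega
        · have := (Finset.mem_powersetCard.mp hA).1 h'
          rw [Finset.mem_Icc] at this ⊢; omega
      · rw [Finset.mem_Icc] at h ⊢; omega
    · exact Finset.empty_subset _
    · rw [← he]
      intro y hy
      rw [Finset.mem_singleton] at hy
      subst hy
      rw [Finset.mem_Icc] at hx ⊢; omega
  -- no U is the full set
  have h_ne_top : ∀ i, U i ≠ Finset.Icc 1 n := by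
    intro i he
    obtain ⟨j, hj⟩ := Fintype.exists_ne_of_one_lt_card
      (α := Fin s) (by rw [Fintype.card_fin]; omega) i
    exact hUinc j i hj (he ▸ hbound _ (hUm j))
  -- no D is empty
  have hDne : ∀ j, D j ≠ ∅ := by
    intro j he
    obtain ⟨k, hk⟩ := Fintype.exists_ne_of_one_lt_card
      (α := Fin t) (by rw [Fintype.card_fin]; omega) j
    exact hDinc j k (Ne.symm hk) (by rw [he]; exact Finset.empty_subset _)
  have hIccCard : (Finset.Icc 1 n).card = n := by rw [Nat.card_Icc]; omega
  -- classification of the D's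
  have hDclass : ∀ j,
      (∃ A ∈ Finset.powersetCard t (Finset.Icc 1 (s+t-1)), D j ∈ Ls A) ∨
      (∃ A ∈ Finset.powersetCard (t-1) (Finset.Icc 1 (s+t-1)), D j ∈ Lt (insert (s+t) A)) ∨
      (∃ x ∈ Finset.Icc 1 (s+t-1), D j = {x}) := by
    intro j
    rcases hmem _ (hDm j) with (he | ⟨x, hx, he⟩) | h2 | h3 | (he | ⟨x, hx, he⟩)
    · exfalso
      have h1 := Finset.ssubset_def.mp (hsub i₀ j)
      exact h1.2 (by rw [he]; exact hbound _ (hUm i₀))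
    · exfalso
      have hxI : x ∈ Finset.Icc 1 n := by rw [Finset.mem_Icc] at hx ⊢; omega
      have hcard : (D j).card = n - 1 := by
        rw [← he, Finset.card_erase_of_mem hxI, hIccCard]
      have hUc := Finset.card_lt_card (hsub i₀ j)
      have hxn : 1 ≤ n := by rw [Finset.mem_Icc] at hxI; omega
      have hUeq : U i₀ = Finset.Icc 1 n :=
        Finset.eq_of_subset_of_card_le (hbound _ (hUm i₀)) (by omega)
      exact h_ne_top i₀ hUeq
    · exact Or.inl h2
    · exact Or.inr (Or.inl h3)
    · exact absurd he (hDne j)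
    · exact Or.inr (Or.inr ⟨x, hx, he.symm⟩)
  -- classification of the U's
  have hUclass : ∀ i,
      (∃ x ∈ Finset.Icc 1 (s+t-1), U i = (Finset.Icc 1 n).erase x) ∨
      (∃ A ∈ Finset.powersetCard t (Finset.Icc 1 (s+t-1)), U i ∈ Ls A) ∨
      (∃ A ∈ Finset.powersetCard (t-1) (Finset.Icc 1 (s+t-1)), U i ∈ Lt (insert (s+t) A)) := by
    intro i
    rcases hmem _ (hUm i) with (he | ⟨x, hx, he⟩) | h2 | h3 | (he | ⟨x, hx, he⟩)
    · exact absurd he (h_ne_top i)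
    · exact Or.inl ⟨x, hx, he.symm⟩
    · exact Or.inr (Or.inl h2)
    · exact Or.inr (Or.inr h3)
    · exfalso
      have h1 := hsub i j₀
      rw [he] at h1
      exact hDne j₀ (Finset.subset_empty.mp (Finset.ssubset_def.mp h1).1)
    · exfalso
      have h1 := hsub i j₀
      rw [← he] at h1
      exact hDne j₀ (Finset.ssubset_singleton_iff.mp h1)
  -- main case analysis
  by_cases hc2 : ∃ i, ∃ A ∈ Finset.powersetCard t (Finset.Icc 1 (s+t-1)), U i ∈ Ls A
  · -- Case 1: some upper set lies in an upper lantern over A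
    obtain ⟨iu, A, hA, hiu⟩ := hc2
    obtain ⟨hA_sub, hAcard⟩ := Finset.mem_powersetCard.mp hA
    have hUb := (hLsB A hA _ hiu).2
    -- every D is in Ls A or a singleton inside A
    have hDcl : ∀ j, D j ∈ Ls A ∨ ∃ x ∈ A, D j = {x} := by
      intro j
      have hDU : D j ⊆ A ∪ Finset.Icc (s+t+1) n :=
        (Finset.ssubset_def.mp (hsub iu j)).1.trans hUb
      rcases hDclass j with ⟨A', hA', hm⟩ | ⟨A', hA', hm⟩ | ⟨x, hx, he⟩
      · obtain ⟨hA's, hA'c⟩ := Finset.mem_powersetCard.mp hA'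
        have hsubA : A' ⊆ A := by
          intro y hy
          have h1 := hDU ((hLsB A' hA' _ hm).1 hy)
          have h2 := hA's hy
          rw [Finset.mem_Icc] at h2
          rcases Finset.mem_union.mp h1 with h | h
          · exact h
          · rw [Finset.mem_Icc] at h; omega
        have heq : A' = A := Finset.eq_of_subset_of_card_le hsubA (by omega)
        exact Or.inl (heq ▸ hm)
      · exfalso
        obtain ⟨hA's, hA'c⟩ := Finset.mem_powersetCard.mp hA'
        have h1 : (s+t) ∈ D j := (hLtB A' hA' _ hm).1 (Finset.mem_insert_self _ _)
        rcases Finset.mem_union.mp (hDU h1) with h | h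
        · have := hA_sub h; rw [Finset.mem_Icc] at this; omega
        · rw [Finset.mem_Icc] at h; omega
      · refine Or.inr ⟨x, ?_, he⟩
        have h1 : x ∈ D j := by rw [he]; exact Finset.mem_singleton_self x
        rcases Finset.mem_union.mp (hDU h1) with h | h
        · exact h
        · exfalso; rw [Finset.mem_Icc] at h hx; omega
    -- A is contained in every U
    have hAU : ∀ i, A ⊆ U i := by
      by_cases hj : ∃ j, D j ∈ Ls A
      · obtain ⟨j, hjm⟩ := hj
        intro i
        exact ((hLsB A hA _ hjm).1).trans (Finset.ssubset_def.mp (hsub i j)).1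
      · push_neg at hj
        have hall : ∀ j, ∃ x, x ∈ A ∧ D j = {x} := by
          intro j
          rcases hDcl j with h | ⟨x, hx, he⟩
          · exact absurd h (hj j)
          · exact ⟨x, hx, he⟩
        choose f hfA hfe using hall
        have hinj : Function.Injective f := by
          intro a b hab
          by_contra hne
          exact hDinc a b hne (by rw [hfe a, hfe b, hab])
        have him : Finset.univ.image f = A := by
          apply Finset.eq_of_subset_of_card_le
          · intro x hx
            simp only [Finset.mem_image, Finset.mem_univ, true_and] at hx
            obtain ⟨a, rfl⟩ := hx
            exact hfA a
          · rw [Finset.card_image_of_injective _ hinj, Finset.card_univ, Fintype.card_fin]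
            omega
        intro i y hy
        rw [← him] at hy
        simp only [Finset.mem_image, Finset.mem_univ, true_and] at hy
        obtain ⟨a, rfl⟩ := hy
        have : f a ∈ D a := by rw [hfe a]; exact Finset.mem_singleton_self _
        exact (Finset.ssubset_def.mp (hsub i a)).1 this
    -- classify the U's
    have hUcl : ∀ i, U i ∈ Ls A ∨ ∃ x, x ∈ Finset.Icc 1 (s+t-1) ∧ x ∉ A ∧
        U i = (Finset.Icc 1 n).erase x := by
      intro i
      rcases hUclass i with ⟨x, hx, he⟩ | ⟨A', hA', hm⟩ | ⟨A', hA', hm⟩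
      · refine Or.inr ⟨x, hx, fun hxA => ?_, he⟩
        have h1 := hAU i hxA
        rw [he] at h1
        exact (Finset.mem_erase.mp h1).1 rfl
      · left
        obtain ⟨hA's, hA'c⟩ := Finset.mem_powersetCard.mp hA'
        have hb := (hLsB A' hA' _ hm).2
        have hAA' : A ⊆ A' := by
          intro y hy
          have h1 := hb (hAU i hy)
          rcases Finset.mem_union.mp h1 with h | h
          · exact h
          · exfalso
            have := hA_sub hy
            rw [Finset.mem_Icc] at this h
            omega
        have heq : A' = A := (Finset.eq_of_subset_of_card_le hAA' (by omega)).symm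
        exact heq ▸ hm
      · exfalso
        obtain ⟨hA's, hA'c⟩ := Finset.mem_powersetCard.mp hA'
        have hb := (hLtB A' hA' _ hm).2
        have hAA' : A ⊆ A' := by
          intro y hy
          have h1 := hb (hAU i hy)
          have hy' := hA_sub hy
          rw [Finset.mem_Icc] at hy'
          rcases Finset.mem_union.mp h1 with h | h
          · rcases Finset.mem_insert.mp h with h' | h'
            · exfalso; omega
            · exact h'
          · exfalso; rw [Finset.mem_Icc] at h; omega
        have := Finset.card_le_card hAA'
        omega
    exact upperEnd n s t hts ht hn Ls A hA (hLs A hA) U hUinc hUcl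
  · by_cases hc3 : ∃ i, ∃ A ∈ Finset.powersetCard (t-1) (Finset.Icc 1 (s+t-1)),
        U i ∈ Lt (insert (s+t) A)
    · -- Case 2: some upper set lies in a lower lantern over insert (s+t) A
      obtain ⟨iu, A, hA, hiu⟩ := hc3
      obtain ⟨hA_sub, hAcard⟩ := Finset.mem_powersetCard.mp hA
      have hUb := (hLtB A hA _ hiu).2
      have hDcl : ∀ j, D j ∈ Lt (insert (s+t) A) ∨ ∃ x ∈ A, D j = {x} := by
        intro j
        have hDU : D j ⊆ insert (s+t) A ∪ Finset.Icc (s+t+1) n :=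
          (Finset.ssubset_def.mp (hsub iu j)).1.trans hUb
        have hPA : ∀ y ∈ D j, y ∈ Finset.Icc 1 (s+t-1) → y ∈ A := by
          intro y hy hyP
          rw [Finset.mem_Icc] at hyP
          rcases Finset.mem_union.mp (hDU hy) with h | h
          · rcases Finset.mem_insert.mp h with h' | h'
            · exfalso; omega
            · exact h'
          · exfalso; rw [Finset.mem_Icc] at h; omega
        rcases hDclass j with ⟨A', hA', hm⟩ | ⟨A', hA', hm⟩ | ⟨x, hx, he⟩
        · exfalso
          obtain ⟨hA's, hA'c⟩ := Finset.mem_powersetCard.mp hA'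
          have hsubA : A' ⊆ A :=
            fun y hy => hPA y ((hLsB A' hA' _ hm).1 hy) (hA's hy)
          have := Finset.card_le_card hsubA
          omega
        · obtain ⟨hA's, hA'c⟩ := Finset.mem_powersetCard.mp hA'
          have hsubA : A' ⊆ A :=
            fun y hy => hPA y ((hLtB A' hA' _ hm).1 (Finset.mem_insert_of_mem hy)) (hA's hy)
          have heq : A' = A := Finset.eq_of_subset_of_card_le hsubA (by omega)
          exact Or.inl (heq ▸ hm)
        · refine Or.inr ⟨x, ?_, he⟩
          exact hPA x (by rw [he]; exact Finset.mem_singleton_self x) hx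
      exact lowerEnd n s t ht Lt A hA (hLt A hA) D hDinc hDcl
    · -- Case 3: all the U's are complements of singletons
      have hUe : ∀ i, ∃ x, x ∈ Finset.Icc 1 (s+t-1) ∧ U i = (Finset.Icc 1 n).erase x := by
        intro i
        rcases hUclass i with ⟨x, hx, he⟩ | h | h
        · exact ⟨x, hx, he⟩
        · exact absurd ⟨i, h⟩ hc2
        · exact absurd ⟨i, h⟩ hc3
      choose g hgP hge using hUe
      have hginj : Function.Injective g := by
        intro a b hab
        by_contra hne
        exact hUinc a b hne (by rw [hge a, hge b, hab])
      have hXcard : (Finset.univ.image g).card = s := by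
        rw [Finset.card_image_of_injective _ hginj, Finset.card_univ, Fintype.card_fin]
      have hXP : Finset.univ.image g ⊆ Finset.Icc 1 (s+t-1) := by
        intro x hx
        simp only [Finset.mem_image, Finset.mem_univ, true_and] at hx
        obtain ⟨a, rfl⟩ := hx
        exact hgP a
      have hA₀card : (Finset.Icc 1 (s+t-1) \ Finset.univ.image g).card = t - 1 := by
        rw [Finset.card_sdiff_of_subset hXP, Nat.card_Icc, hXcard]
        omega
      have hA₀mem : Finset.Icc 1 (s+t-1) \ Finset.univ.image g ∈
          Finset.powersetCard (t-1) (Finset.Icc 1 (s+t-1)) :=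
        Finset.mem_powersetCard.mpr ⟨Finset.sdiff_subset, hA₀card⟩
      set A₀ := Finset.Icc 1 (s+t-1) \ Finset.univ.image g with hA₀def
      have hDnotg : ∀ j, ∀ i, g i ∉ D j := by
        intro j i hgi
        have h1 := (Finset.ssubset_def.mp (hsub i j)).1 hgi
        rw [hge i] at h1
        exact (Finset.mem_erase.mp h1).1 rfl
      have hDA₀ : ∀ j, ∀ y ∈ D j, y ∈ Finset.Icc 1 (s+t-1) → y ∈ A₀ := by
        intro j y hy hyP
        rw [hA₀def, Finset.mem_sdiff]
        refine ⟨hyP, fun hyX => ?_⟩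
        simp only [Finset.mem_image, Finset.mem_univ, true_and] at hyX
        obtain ⟨a, ha⟩ := hyX
        exact hDnotg j a (ha ▸ hy)
      have hDcl : ∀ j, D j ∈ Lt (insert (s+t) A₀) ∨ ∃ x ∈ A₀, D j = {x} := by
        intro j
        rcases hDclass j with ⟨A', hA', hm⟩ | ⟨A', hA', hm⟩ | ⟨x, hx, he⟩
        · exfalso
          obtain ⟨hA's, hA'c⟩ := Finset.mem_powersetCard.mp hA'
          have hsubA : A' ⊆ A₀ :=
            fun y hy => hDA₀ j y ((hLsB A' hA' _ hm).1 hy) (hA's hy)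
          have := Finset.card_le_card hsubA
          omega
        · obtain ⟨hA's, hA'c⟩ := Finset.mem_powersetCard.mp hA'
          have hsubA : A' ⊆ A₀ :=
            fun y hy => hDA₀ j y ((hLtB A' hA' _ hm).1 (Finset.mem_insert_of_mem hy)) (hA's hy)
          have heq : A' = A₀ := Finset.eq_of_subset_of_card_le hsubA (by omega)
          exact Or.inl (heq ▸ hm)
        · refine Or.inr ⟨x, ?_, he⟩
          exact hDA₀ j x (by rw [he]; exact Finset.mem_singleton_self x) hx
      exact lowerEnd n s t ht Lt A₀ hA₀mem (hLt A₀ hA₀mem) D hDinc hDcl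
end

section
/- Let s ≥ t ≥ 2, n ≥ 2s + t − 1, let F' be the lantern construction and F = F' ∪ F_5 the completed construction. If F ∈ 2^[n] ∖ F satisfies |F ∩ [s+t−1]| ∈ {0, s+t−1}, then F ∪ {F} contains an induced copy of K_{s,t}. -/
open Finset

/-- `G₁ = ⋃_{i=2}^{s} {[n] \ A : A an i-element subset of [2s+t-1]}`. -/
def lanternG1 (n s t : ℕ) : Finset (Finset ℕ) :=
  (Finset.Icc 2 s).biUnion fun i =>
    (Finset.powersetCard i (Finset.Icc 1 (2*s+t-1))).image fun A => Finset.Icc 1 n \ A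

/-- `G₂ = ⋃_{i=2}^{t} {A : A an i-element subset of [s+2t-1]}`. -/
def lanternG2 (s t : ℕ) : Finset (Finset ℕ) :=
  (Finset.Icc 2 t).biUnion fun i => Finset.powersetCard i (Finset.Icc 1 (s+2*t-1))

private lemma memFam_F1 (n s t : ℕ) (Ls Lt : Finset ℕ → Finset (Finset ℕ))
    {X : Finset ℕ} (h : X ∈ lanternF1 n s t) : X ∈ lanternFam n s t Ls Lt := by
  unfold lanternFam
  exact mem_union_left _ (mem_union_left _ (mem_union_left _ h))

private lemma memFam_F4 (n s t : ℕ) (Ls Lt : Finset ℕ → Finset (Finset ℕ))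
    {X : Finset ℕ} (h : X ∈ lanternF4 s t) : X ∈ lanternFam n s t Ls Lt := by
  unfold lanternFam
  exact mem_union_right _ h

/-- for the completed construction `F = F' ∪ F₅`, adding any
`F ∈ 2^[n] \ F` with `|F ∩ [s+t-1]| ∈ {0, s+t-1}` creates an induced `K_{s,t}`. -/
theorem stmt8
    (n s t : ℕ) (hts : t ≤ s) (ht : 2 ≤ t) (hn : 2*s + t - 1 ≤ n)
    (Ls Lt : Finset ℕ → Finset (Finset ℕ))
    (hLs : ∀ A ∈ Finset.powersetCard t (Finset.Icc 1 (s+t-1)),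
      IsUpperLantern n s t A (Ls A))
    (hLt : ∀ A ∈ Finset.powersetCard (t-1) (Finset.Icc 1 (s+t-1)),
      IsLowerLantern n s t (insert (s+t) A) (Lt (insert (s+t) A)))
    (F5 : Finset (Finset ℕ))
    (hF5sub : F5 ⊆ lanternG1 n s t ∪ lanternG2 s t)
    (hF5free : ¬ ContainsIndKst s t (lanternFam n s t Ls Lt ∪ F5))
    (hF5max : ∀ X ∈ lanternG1 n s t ∪ lanternG2 s t, X ∉ F5 →
      ContainsIndKst s t (lanternFam n s t Ls Lt ∪ insert X F5))
    (F : Finset ℕ) (hFsub : F ⊆ Finset.Icc 1 n)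
    (hFnot : F ∉ lanternFam n s t Ls Lt ∪ F5)
    (hcard : (F ∩ Finset.Icc 1 (s+t-1)).card = 0 ∨
             (F ∩ Finset.Icc 1 (s+t-1)).card = s+t-1) :
    ContainsIndKst s t (insert F (lanternFam n s t Ls Lt ∪ F5)) := by
  classical
  have hs2 : 2 ≤ s := le_trans ht hts
  have hn5 : 5 ≤ n := by omega
  have hItop : (Finset.Icc 1 n) ∈ lanternFam n s t Ls Lt :=
    memFam_F1 n s t Ls Lt (Finset.mem_insert_self _ _)
  have hErase : ∀ x, 1 ≤ x → x ≤ s + t - 1 →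
      (Finset.Icc 1 n).erase x ∈ lanternFam n s t Ls Lt := by
    intro x h1 h2
    refine memFam_F1 n s t Ls Lt ?_
    exact Finset.mem_insert_of_mem
      (Finset.mem_image.mpr ⟨x, Finset.mem_Icc.mpr ⟨h1, h2⟩, rfl⟩)
  have hSing : ∀ x, 1 ≤ x → x ≤ s + t - 1 →
      ({x} : Finset ℕ) ∈ lanternFam n s t Ls Lt := by
    intro x h1 h2
    refine memFam_F4 n s t Ls Lt ?_
    exact Finset.mem_insert_of_mem
      (Finset.mem_image.mpr ⟨x, Finset.mem_Icc.mpr ⟨h1, h2⟩, rfl⟩)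
  have hEmpty : (∅ : Finset ℕ) ∈ lanternFam n s t Ls Lt :=
    memFam_F4 n s t Ls Lt (Finset.mem_insert_self _ _)
  have hFam : ∀ X ∈ lanternFam n s t Ls Lt,
      X ∈ insert F (lanternFam n s t Ls Lt ∪ F5) :=
    fun X hX => Finset.mem_insert_of_mem (Finset.mem_union_left _ hX)
  have hFmem : F ∈ insert F (lanternFam n s t Ls Lt ∪ F5) := Finset.mem_insert_self _ _
  have hFne : F ≠ ∅ := fun h => hFnot (Finset.mem_union_left _ (h ▸ hEmpty))
  have hFneTop : F ≠ Finset.Icc 1 n := fun h => hFnot (Finset.mem_union_left _ (h ▸ hItop))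
  have cardI : (Finset.Icc 1 n).card = n := by rw [Nat.card_Icc]; omega
  have cardErase : ∀ x, 1 ≤ x → x ≤ n → ((Finset.Icc 1 n).erase x).card = n - 1 := by
    intro x h1 h2
    rw [Finset.card_erase_of_mem (Finset.mem_Icc.mpr ⟨h1, h2⟩), cardI]
  have hFel : ∀ x ∈ F, 1 ≤ x ∧ x ≤ n := fun x hx => Finset.mem_Icc.mp (hFsub hx)
  rcases hcard with h0 | hfull
  · -- Case A : F ∩ [s+t-1] = ∅
    have hdisj : F ∩ Finset.Icc 1 (s + t - 1) = ∅ := Finset.card_eq_zero.mp h0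
    have hno : ∀ x ∈ F, s + t - 1 < x := by
      intro x hx
      by_contra hle
      have hx1 := (hFel x hx).1
      have : x ∈ F ∩ Finset.Icc 1 (s + t - 1) :=
        Finset.mem_inter.mpr ⟨hx, Finset.mem_Icc.mpr ⟨hx1, by omega⟩⟩
      rw [hdisj] at this
      exact absurd this (Finset.notMem_empty x)
    refine ⟨fun i => (Finset.Icc 1 n).erase (t + i.val),
            fun j => if j.val = 0 then F else {j.val}, ?_, ?_, ?_, ?_, ?_⟩
    · intro i
      exact hFam _ (hErase (t + i.val) (by omega) (by have := i.isLt; omega))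
    · intro j
      by_cases hj : j.val = 0
      · simpa [hj] using hFmem
      · simp only [if_neg hj]
        exact hFam _ (hSing j.val (by omega) (by have := j.isLt; omega))
    · intro i j hij hsub
      have hji : t + j.val ∈ (Finset.Icc 1 n).erase (t + i.val) := by
        have hjlt := j.isLt
        refine Finset.mem_erase.mpr ⟨?_, Finset.mem_Icc.mpr ⟨by omega, by omega⟩⟩
        intro h
        exact hij (Fin.ext (by omega))
      exact (Finset.mem_erase.mp (hsub hji)).1 rfl
    · intro i j hij hsub
      by_cases hi : i.val = 0 <;> by_cases hj : j.val = 0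
      · exact hij (Fin.ext (by omega))
      · simp only [if_pos hi, if_neg hj] at hsub
        obtain ⟨a, ha⟩ := Finset.nonempty_iff_ne_empty.mpr hFne
        have haj : a = j.val := Finset.mem_singleton.mp (hsub ha)
        have := hno a ha
        have := j.isLt
        omega
      · simp only [if_neg hi, if_pos hj] at hsub
        have hmem : (i.val : ℕ) ∈ F := hsub (Finset.mem_singleton_self _)
        have := hno _ hmem
        have := i.isLt
        omega
      · simp only [if_neg hi, if_neg hj] at hsub
        have : (i.val : ℕ) = j.val := Finset.mem_singleton.mp (hsub (Finset.mem_singleton_self _))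
        exact hij (Fin.ext this)
    · intro i j
      have hilt := i.isLt
      rw [Finset.ssubset_def]
      by_cases hj : j.val = 0
      · simp only [if_pos hj]
        constructor
        · intro x hx
          have hx1 := (hFel x hx).1
          have hx2 := (hFel x hx).2
          have := hno x hx
          exact Finset.mem_erase.mpr ⟨by omega, Finset.mem_Icc.mpr ⟨hx1, hx2⟩⟩
        · intro hsub
          have h1 : (1 : ℕ) ∈ (Finset.Icc 1 n).erase (t + i.val) :=
            Finset.mem_erase.mpr ⟨by omega, Finset.mem_Icc.mpr ⟨le_refl 1, by omega⟩⟩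
          have := hno 1 (hsub h1)
          omega
      · simp only [if_neg hj]
        have hjlt := j.isLt
        constructor
        · refine Finset.singleton_subset_iff.mpr (Finset.mem_erase.mpr ⟨by omega,
            Finset.mem_Icc.mpr ⟨by omega, by omega⟩⟩)
        · intro hsub
          have hc := Finset.card_le_card hsub
          rw [cardErase _ (by omega) (by omega), Finset.card_singleton] at hc
          omega
  · -- Case B : [s+t-1] ⊆ F
    have hinter : F ∩ Finset.Icc 1 (s + t - 1) = Finset.Icc 1 (s + t - 1) := by
      refine Finset.eq_of_subset_of_card_le Finset.inter_subset_right ?_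
      rw [hfull, Nat.card_Icc]
      omega
    have hsubF : Finset.Icc 1 (s + t - 1) ⊆ F := by
      intro x hx
      rw [← hinter] at hx
      exact (Finset.mem_inter.mp hx).1
    have hmemF : ∀ x, 1 ≤ x → x ≤ s + t - 1 → x ∈ F :=
      fun x h1 h2 => hsubF (Finset.mem_Icc.mpr ⟨h1, h2⟩)
    refine ⟨fun i => if i.val = 0 then F else (Finset.Icc 1 n).erase (t + i.val),
            fun j => {j.val + 1}, ?_, ?_, ?_, ?_, ?_⟩
    · intro i
      by_cases hi : i.val = 0
      · simpa [hi] using hFmem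
      · simp only [if_neg hi]
        exact hFam _ (hErase (t + i.val) (by omega) (by have := i.isLt; omega))
    · intro j
      exact hFam _ (hSing (j.val + 1) (by omega) (by have := j.isLt; omega))
    · intro i j hij hsub
      have hilt := i.isLt
      have hjlt := j.isLt
      by_cases hi : i.val = 0 <;> by_cases hj : j.val = 0
      · exact hij (Fin.ext (by omega))
      · -- F ⊆ erase (t+j) : impossible since t+j ∈ F
        simp only [if_pos hi, if_neg hj] at hsub
        have : t + j.val ∈ F := hmemF _ (by omega) (by omega)
        exact (Finset.mem_erase.mp (hsub this)).1 rfl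
      · -- erase (t+i) ⊆ F : forces F = [n]
        simp only [if_neg hi, if_pos hj] at hsub
        have hin : t + i.val ∈ Finset.Icc 1 n := Finset.mem_Icc.mpr ⟨by omega, by omega⟩
        have hIF : Finset.Icc 1 n ⊆ F := by
          intro x hx
          rw [← Finset.insert_erase hin] at hx
          rcases Finset.mem_insert.mp hx with h | h
          · exact h ▸ hmemF _ (by omega) (by omega)
          · exact hsub h
        exact hFneTop (Finset.Subset.antisymm hFsub hIF)
      · simp only [if_neg hi, if_neg hj] at hsub
        have hji : t + j.val ∈ (Finset.Icc 1 n).erase (t + i.val) := by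
          refine Finset.mem_erase.mpr ⟨?_, Finset.mem_Icc.mpr ⟨by omega, by omega⟩⟩
          intro h
          exact hij (Fin.ext (by omega))
        exact (Finset.mem_erase.mp (hsub hji)).1 rfl
    · intro i j hij hsub
      have : (i.val : ℕ) + 1 = j.val + 1 :=
        Finset.mem_singleton.mp (hsub (Finset.mem_singleton_self _))
      exact hij (Fin.ext (by omega))
    · intro i j
      have hilt := i.isLt
      have hjlt := j.isLt
      rw [Finset.ssubset_def]
      by_cases hi : i.val = 0
      · simp only [if_pos hi]
        constructor
        · exact Finset.singleton_subset_iff.mpr (hmemF _ (by omega) (by omega))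
        · intro hsub
          have hc := Finset.card_le_card hsub
          have hc2 := Finset.card_le_card hsubF
          rw [Nat.card_Icc] at hc2
          rw [Finset.card_singleton] at hc
          omega
      · simp only [if_neg hi]
        constructor
        · refine Finset.singleton_subset_iff.mpr (Finset.mem_erase.mpr ⟨by omega,
            Finset.mem_Icc.mpr ⟨by omega, by omega⟩⟩)
        · intro hsub
          have hc := Finset.card_le_card hsub
          rw [cardErase _ (by omega) (by omega), Finset.card_singleton] at hc
          omega
end

section
/- Let s ≥ t ≥ 2, n ≥ 2s + t − 1, let F' be the lantern construction and F = F' ∪ F_5 the completed construction. If F ∈ 2^[n] ∖ F satisfies 1 ≤ |F ∩ [s+t−1]| ≤ t − 1, then F ∪ {F} contains an induced copy of K_{s,t}. -/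
open Finset

lemma chain_exists_card {A B : Finset ℕ} {C : Finset (Finset ℕ)}
    (h : IsCompleteChain A B C) {k : ℕ} (hk1 : A.card ≤ k) (hk2 : k ≤ B.card) :
    ∃ X, X ∈ C ∧ X.card = k := by
  obtain ⟨hA, hB, hbet, htot, hcard⟩ := h
  have hAB : A ⊆ B := (hbet A hA).2
  have hinj : Set.InjOn Finset.card (C : Set (Finset ℕ)) := by
    intro X hX Y hY hXY
    rcases htot X hX Y hY with h' | h'
    · exact Finset.eq_of_subset_of_card_le h' (le_of_eq hXY.symm)
    · exact (Finset.eq_of_subset_of_card_le h' (le_of_eq hXY)).symm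
  have himg : C.image Finset.card ⊆ Finset.Icc A.card B.card := by
    intro m hm
    obtain ⟨X, hX, rfl⟩ := Finset.mem_image.1 hm
    exact Finset.mem_Icc.2 ⟨Finset.card_le_card (hbet X hX).1,
      Finset.card_le_card (hbet X hX).2⟩
  have heq : C.image Finset.card = Finset.Icc A.card B.card := by
    apply Finset.eq_of_subset_of_card_le himg
    rw [Finset.card_image_of_injOn hinj, hcard, Nat.card_Icc, Finset.card_sdiff_of_subset hAB]
    have := Finset.card_le_card hAB
    omega
  have : k ∈ C.image Finset.card := heq ▸ Finset.mem_Icc.2 ⟨hk1, hk2⟩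
  obtain ⟨X, hX, hXk⟩ := Finset.mem_image.1 this
  exact ⟨X, hX, hXk⟩

lemma stmt9_aux
    (n s t : ℕ) (hts : t ≤ s) (ht : 2 ≤ t) (hn : 2*s + t - 1 ≤ n)
    (Lt : Finset ℕ → Finset (Finset ℕ))
    (fam : Finset (Finset ℕ))
    (hLt : ∀ A ∈ Finset.powersetCard (t-1) (Finset.Icc 1 (s+t-1)),
      IsLowerLantern n s t (insert (s+t) A) (Lt (insert (s+t) A)))
    (F5 : Finset (Finset ℕ))
    (hfam1 : lanternF1 n s t ⊆ fam)
    (hfam3 : lanternF3 s t Lt ⊆ fam)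
    (hfam4 : lanternF4 s t ⊆ fam)
    (F : Finset ℕ) (hFsub : F ⊆ Finset.Icc 1 n)
    (hFnot : F ∉ fam ∪ F5)
    (hG : F ∉ lanternG2 s t)
    (hlow : 1 ≤ (F ∩ Finset.Icc 1 (s+t-1)).card)
    (hhigh : (F ∩ Finset.Icc 1 (s+t-1)).card ≤ t - 1) :
    ContainsIndKst s t (insert F (fam ∪ F5)) := by
  classical
  have hs2 : 2 ≤ s := le_trans ht hts
  set S := F ∩ Finset.Icc 1 (s+t-1) with hSdef
  have hSF : S ⊆ F := Finset.inter_subset_left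
  have hSIcc : S ⊆ Finset.Icc 1 (s+t-1) := Finset.inter_subset_right
  obtain ⟨A', hSA', hA'sub, hA'card⟩ :=
    Finset.exists_subsuperset_card_eq hSIcc hhigh (by rw [Nat.card_Icc]; omega)
  have hstA' : s + t ∉ A' := by
    intro h
    have := hA'sub h
    rw [Finset.mem_Icc] at this
    omega
  have hA'mem : A' ∈ Finset.powersetCard (t-1) (Finset.Icc 1 (s+t-1)) :=
    Finset.mem_powersetCard.2 ⟨hA'sub, hA'card⟩
  obtain ⟨⟨C, hCchain, hCdisj, hLeq⟩, hfirst⟩ := hLt A' hA'mem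
  set B0 : Finset ℕ := insert (s+t) A' with hB0def
  set top : Finset ℕ := B0 ∪ Finset.Icc (s+t+1) n with htopdef
  have hB0card : B0.card = t := by
    rw [hB0def, Finset.card_insert_of_notMem hstA', hA'card]; omega
  have hdisjB : Disjoint B0 (Finset.Icc (s+t+1) n) := by
    rw [Finset.disjoint_left]
    intro a ha h2
    rw [Finset.mem_Icc] at h2
    rw [hB0def, Finset.mem_insert] at ha
    rcases ha with rfl | ha
    · omega
    · have := hA'sub ha; rw [Finset.mem_Icc] at this; omega
  have htopcard : top.card = n - s := by
    rw [htopdef, Finset.card_union_of_disjoint hdisjB, hB0card, Nat.card_Icc]; omega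
  have hmemLt : ∀ (j : Fin (t-1)) X, X ∈ C j → X ∈ Lt B0 := by
    intro j X hX
    rw [hLeq]
    exact Finset.mem_biUnion.2 ⟨j, Finset.mem_univ _, hX⟩
  have hmemFam : ∀ X ∈ Lt B0, X ∈ fam := by
    intro X hX
    exact hfam3 (Finset.mem_biUnion.2 ⟨A', hA'mem, hX⟩)
  -- cardinality facts about F
  have hFT : F ⊆ S ∪ Finset.Icc (s+t) n := by
    intro a ha
    have h1 := hFsub ha
    rw [Finset.mem_Icc] at h1
    by_cases h2 : a ≤ s+t-1
    · exact Finset.mem_union_left _ (Finset.mem_inter.2 ⟨ha, Finset.mem_Icc.2 ⟨h1.1, h2⟩⟩)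
    · exact Finset.mem_union_right _ (Finset.mem_Icc.2 ⟨by omega, h1.2⟩)
  have hFle : F.card ≤ n - s := by
    have h1 := Finset.card_le_card hFT
    have h2 := Finset.card_union_le S (Finset.Icc (s+t) n)
    rw [Nat.card_Icc] at h2
    omega
  have hFne : F.card ≠ n - s := by
    intro heq
    have h1 := Finset.card_le_card hFT
    have h2 := Finset.card_union_le S (Finset.Icc (s+t) n)
    rw [Nat.card_Icc] at h2
    have hScard : S.card = t - 1 := by omega
    have hAS : S = A' := Finset.eq_of_subset_of_card_le hSA' (by omega)
    have hT : A' ∪ Finset.Icc (s+t) n = top := by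
      ext a
      rw [htopdef, hB0def]
      simp only [Finset.mem_union, Finset.mem_insert, Finset.mem_Icc]
      by_cases ha : a ∈ A' <;> simp [ha] <;> omega
    have hFsub2 : F ⊆ top := by
      rw [← hT, ← hAS]
      exact hFT
    have hFtop : F = top := Finset.eq_of_subset_of_card_le hFsub2 (by omega)
    have htopC : top ∈ C ⟨0, by omega⟩ := (hCchain _).2.1
    exact hFnot (Finset.mem_union_left _ (hFtop ▸ hmemFam _ (hmemLt _ _ htopC)))
  -- the common size k
  obtain ⟨k, hk1, hkF, hk2, hcase⟩ :
      ∃ k, t+1 ≤ k ∧ F.card ≤ k ∧ k ≤ n - s ∧ (F.card = k ∨ (F.card ≤ t ∧ k = t+1)) := by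
    by_cases h : F.card ≤ t
    · exact ⟨t+1, le_refl _, by omega, by omega, Or.inr ⟨h, rfl⟩⟩
    · exact ⟨F.card, by omega, le_refl _, by omega, Or.inl rfl⟩
  -- the lower sets from the lantern
  have hMex : ∀ j : Fin (t-1), ∃ X, X ∈ C j ∧ X.card = k := fun j =>
    chain_exists_card (hCchain j) (by rw [hB0card]; omega) (by rw [htopcard]; exact hk2)
  choose M hMmem hMcard using hMex
  have hMbet : ∀ j, B0 ⊆ M j ∧ M j ⊆ top := fun j => (hCchain j).2.2.1 _ (hMmem j)
  have hMfam : ∀ j, M j ∈ fam := fun j => hmemFam _ (hmemLt j _ (hMmem j))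
  -- the upper indices
  have hXcard : (Finset.Icc 1 (s+t-1) \ A').card = s := by
    rw [Finset.card_sdiff_of_subset hA'sub, Nat.card_Icc, hA'card]; omega
  set x : Fin s → ℕ := fun i => ((Finset.Icc 1 (s+t-1) \ A').orderIsoOfFin hXcard i : ℕ)
    with hxdef
  have hxmem : ∀ i, x i ∈ Finset.Icc 1 (s+t-1) \ A' := fun i =>
    ((Finset.Icc 1 (s+t-1) \ A').orderIsoOfFin hXcard i).2
  have hxinj : ∀ i j : Fin s, x i = x j → i = j := fun i j h =>
    (Finset.orderIsoOfFin _ hXcard).injective (Subtype.ext h)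
  have hxprop : ∀ i, (1 ≤ x i ∧ x i ≤ s+t-1) ∧ x i ∉ A' := by
    intro i
    have := hxmem i
    rw [Finset.mem_sdiff, Finset.mem_Icc] at this
    exact this
  have hxF : ∀ i, x i ∉ F := by
    intro i hxi
    exact (hxprop i).2 (hSA' (Finset.mem_inter.2 ⟨hxi, Finset.mem_Icc.2 (hxprop i).1⟩))
  set U : Fin s → Finset ℕ := fun i => (Finset.Icc 1 n).erase (x i) with hUdef
  have hUfam : ∀ i, U i ∈ fam := by
    intro i
    refine hfam1 (Finset.mem_insert_of_mem (Finset.mem_image.2 ⟨x i, ?_, rfl⟩))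
    exact Finset.mem_Icc.2 ⟨(hxprop i).1.1, (hxprop i).1.2⟩
  have htopsubU : ∀ i, top ⊆ U i := by
    intro i a ha
    have hxi := hxprop i
    rw [htopdef, hB0def] at ha
    rw [Finset.mem_union, Finset.mem_insert, Finset.mem_Icc] at ha
    show a ∈ (Finset.Icc 1 n).erase (x i)
    simp only [Finset.mem_erase, Finset.mem_Icc]
    rcases ha with (rfl | ha) | ha
    · exact ⟨by omega, by omega, by omega⟩
    · have h2 := hA'sub ha
      rw [Finset.mem_Icc] at h2
      exact ⟨fun h => hxi.2 (h ▸ ha), by omega, by omega⟩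
    · exact ⟨by omega, by omega, by omega⟩
  -- incomparability lemmas
  have hMM : ∀ a b : Fin (t-1), a ≠ b → ¬ M a ⊆ M b := by
    intro a b hab hsub
    have hne : a.1 ≠ b.1 := fun h => hab (Fin.ext h)
    have ha2 := a.2
    have hb2 := b.2
    have heq : M a = M b :=
      Finset.eq_of_subset_of_card_le hsub (by rw [hMcard a, hMcard b])
    have hmem2 : M a ∈ C a ∩ C b := Finset.mem_inter.2 ⟨hMmem a, heq ▸ hMmem b⟩
    rw [hCdisj a b hab, Finset.mem_insert, Finset.mem_singleton] at hmem2
    rcases hmem2 with h | h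
    · have := hMcard a
      rw [h, hB0card] at this
      omega
    · have := hMcard a
      rw [h, htopcard] at this
      rcases hcase with h' | ⟨_, h'⟩ <;> omega
  have hMF : ∀ a, ¬ M a ⊆ F := by
    intro a hsub
    have : M a = F := Finset.eq_of_subset_of_card_le hsub (by rw [hMcard a]; exact hkF)
    exact hFnot (this ▸ Finset.mem_union_left _ (hMfam a))
  have hFM : ∀ a, ¬ F ⊆ M a := by
    intro a hsub
    rcases hcase with hFck | ⟨hFt, hkt⟩
    · have : F = M a :=
        Finset.eq_of_subset_of_card_le hsub (by rw [hMcard a, ← hFck])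
      exact hFnot (by rw [this]; exact Finset.mem_union_left _ (hMfam a))
    · have hMsub : M a ⊆ Finset.Icc 1 (s+2*t-1) := by
        intro b hb
        by_cases hbB : b ∈ B0
        · rw [hB0def, Finset.mem_insert] at hbB
          rw [Finset.mem_Icc]
          rcases hbB with rfl | hbA
          · omega
          · have := hA'sub hbA; rw [Finset.mem_Icc] at this; omega
        · have hfil : M a ∈ (Lt B0).filter (fun X => X.card = B0.card + 1) :=
            Finset.mem_filter.2 ⟨hmemLt a _ (hMmem a), by rw [hMcard a, hB0card, hkt]⟩
          have hsup : M a ⊆ ((Lt B0).filter (fun X => X.card = B0.card + 1)).sup id :=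
            Finset.le_sup (f := id) hfil
          have hbinc : b ∈ firstIncrementSet B0 (Lt B0) :=
            Finset.mem_sdiff.2 ⟨hsup hb, hbB⟩
          rw [hfirst] at hbinc
          rw [Finset.mem_Icc] at hbinc ⊢
          omega
      have hFsub2 : F ⊆ Finset.Icc 1 (s+2*t-1) := hsub.trans hMsub
      rcases Nat.lt_or_ge F.card 2 with hc | hc
      · have hcS : S.card ≤ F.card := Finset.card_le_card hSF
        have hF1 : F.card = 1 := by omega
        obtain ⟨a0, ha0⟩ := Finset.card_eq_one.1 hF1
        have hSeq : S = F := Finset.eq_of_subset_of_card_le hSF (by omega)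
        have ha0m : a0 ∈ Finset.Icc 1 (s+t-1) := by
          apply hSIcc
          rw [hSeq, ha0]
          exact Finset.mem_singleton_self a0
        have : F ∈ lanternF4 s t :=
          Finset.mem_insert_of_mem (Finset.mem_image.2 ⟨a0, ha0m, ha0.symm⟩)
        exact hFnot (Finset.mem_union_left _ (hfam4 this))
      · exact hG (Finset.mem_biUnion.2 ⟨F.card, Finset.mem_Icc.2 ⟨hc, by omega⟩,
          Finset.mem_powersetCard.2 ⟨hFsub2, rfl⟩⟩)
  -- proper subset lemmas
  have hUcard : ∀ i, (U i).card = n - 1 := by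
    intro i
    have hx := (hxprop i).1
    show ((Finset.Icc 1 n).erase (x i)).card = n - 1
    rw [Finset.card_erase_of_mem (Finset.mem_Icc.2 ⟨hx.1, by omega⟩), Nat.card_Icc]
    omega
  have hFU : ∀ i, F ⊂ U i := by
    intro i
    rw [Finset.ssubset_iff_subset_ne]
    constructor
    · intro a ha
      exact Finset.mem_erase.2 ⟨fun h => hxF i (h ▸ ha), hFsub ha⟩
    · intro h
      have h2 := congrArg Finset.card h
      rw [hUcard i] at h2
      omega
  have hMU : ∀ a i, M a ⊂ U i := by
    intro a i
    rw [Finset.ssubset_iff_subset_ne]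
    constructor
    · exact (hMbet a).2.trans (htopsubU i)
    · intro h
      have h2 := congrArg Finset.card h
      rw [hMcard a, hUcard i] at h2
      omega
  -- assemble
  refine ⟨U, fun j => if h : (j : ℕ) < t - 1 then M ⟨j, h⟩ else F, ?_, ?_, ?_, ?_, ?_⟩
  · exact fun i => Finset.mem_insert_of_mem (Finset.mem_union_left _ (hUfam i))
  · intro j
    show (if h : (j : ℕ) < t - 1 then M ⟨j, h⟩ else F) ∈ insert F (fam ∪ F5)
    split_ifs with h
    · exact Finset.mem_insert_of_mem (Finset.mem_union_left _ (hMfam _))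
    · exact Finset.mem_insert_self _ _
  · intro i j hij hsub
    have h1 : x j ∈ U i := by
      refine Finset.mem_erase.2 ⟨fun h => hij (hxinj j i h).symm, ?_⟩
      have hx := (hxprop j).1
      exact Finset.mem_Icc.2 ⟨hx.1, by omega⟩
    have h2 : x j ∉ U j := fun h => (Finset.mem_erase.1 h).1 rfl
    exact h2 (hsub h1)
  · intro i j hij
    show ¬ (if h : (i : ℕ) < t - 1 then M ⟨i, h⟩ else F) ⊆
        (if h : (j : ℕ) < t - 1 then M ⟨j, h⟩ else F)
    split_ifs with hi hj hj
    · refine hMM _ _ (fun h => hij ?_)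
      have h' := congrArg Fin.val h
      exact Fin.ext h'
    · exact hMF _
    · exact hFM _
    · exact absurd (Fin.ext (by have := i.2; have := j.2; omega)) hij
  · intro i j
    show (if h : (j : ℕ) < t - 1 then M ⟨j, h⟩ else F) ⊂ U i
    split_ifs with h
    · exact hMU _ i
    · exact hFU i

/-- for the completed construction `F = F' ∪ F₅`, adding any
`F ∈ 2^[n] \ F` with `1 ≤ |F ∩ [s+t-1]| ≤ t - 1` creates an induced `K_{s,t}`. -/
theorem stmt9
    (n s t : ℕ) (hts : t ≤ s) (ht : 2 ≤ t) (hn : 2*s + t - 1 ≤ n)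
    (Ls Lt : Finset ℕ → Finset (Finset ℕ))
    (hLs : ∀ A ∈ Finset.powersetCard t (Finset.Icc 1 (s+t-1)),
      IsUpperLantern n s t A (Ls A))
    (hLt : ∀ A ∈ Finset.powersetCard (t-1) (Finset.Icc 1 (s+t-1)),
      IsLowerLantern n s t (insert (s+t) A) (Lt (insert (s+t) A)))
    (F5 : Finset (Finset ℕ))
    (hF5sub : F5 ⊆ lanternG1 n s t ∪ lanternG2 s t)
    (hF5free : ¬ ContainsIndKst s t (lanternFam n s t Ls Lt ∪ F5))
    (hF5max : ∀ X ∈ lanternG1 n s t ∪ lanternG2 s t, X ∉ F5 →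
      ContainsIndKst s t (lanternFam n s t Ls Lt ∪ insert X F5))
    (F : Finset ℕ) (hFsub : F ⊆ Finset.Icc 1 n)
    (hFnot : F ∉ lanternFam n s t Ls Lt ∪ F5)
    (hlow : 1 ≤ (F ∩ Finset.Icc 1 (s+t-1)).card)
    (hhigh : (F ∩ Finset.Icc 1 (s+t-1)).card ≤ t - 1) :
    ContainsIndKst s t (insert F (lanternFam n s t Ls Lt ∪ F5)) := by
  classical
  by_cases hG : F ∈ lanternG1 n s t ∪ lanternG2 s t
  · have hF5 : F ∉ F5 := fun h => hFnot (Finset.mem_union_right _ h)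
    have h := hF5max F hG hF5
    rwa [Finset.union_insert] at h
  · refine stmt9_aux n s t hts ht hn Lt (lanternFam n s t Ls Lt) hLt F5 ?_ ?_ ?_ F hFsub
      hFnot (fun h => hG (Finset.mem_union_right _ h)) hlow hhigh
    · exact fun X hX =>
        Finset.mem_union_left _ (Finset.mem_union_left _ (Finset.mem_union_left _ hX))
    · exact fun X hX => Finset.mem_union_left _ (Finset.mem_union_right _ hX)
    · exact fun X hX => Finset.mem_union_right _ hX
end
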